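/- arXiv:2205.15719 — 3 statements merged into one kernel-verified Lean document; each statement's English description precedes it below -/
import Mathlib

section
/- Let N ≥ 3 and let p, q > 1 satisfy 1/(p+1) + 1/(q+1) = (N-2)/N. Let K₁, K₂ be bounded continuous functions on ℝ^N, let (v₁, v₂) be a pair of C² functions solving -Δv₁ = K₁ v₂^p and -Δv₂ = K₂ v₁^q on ℝ^N with v₁, v₂ > 0, and let (ξ₁, ξ₂) be a pair of C² functions solving -Δξ₁ = p K₁ v₂^{p-1} ξ₂ and -Δξ₂ = q K₂ v₁^{q-1} ξ₁ on ℝ^N. Assume the decay bounds |v_i(y)| + |ξ_i(y)| ≤ C(1+|y|)^{-(N-2)} and |∇v_i(y)| + |∇ξ_i(y)| ≤ C(1+|y|)^{-(N-1)} for i = 1,2. Then all the integrals below converge absolutely and (N-2) ∫_{ℝ^N} (∇v₁·∇ξ₂ + ∇v₂·∇ξ₁) = N ∫_{ℝ^N} (K₁ v₂^p ξ₂ + K₂ v₁^q ξ₁). -/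
open MeasureTheory Real Filter
open scoped RealInnerProductSpace ENNReal

noncomputable section

abbrev Euc (N : ℕ) := EuclideanSpace ℝ (Fin N)

/-- The Laplacian, as the sum of the second partial derivatives. -/
def lapl {N : ℕ} (u : Euc N → ℝ) (y : Euc N) : ℝ :=
  ∑ i : Fin N,
    fderiv ℝ (fun z => fderiv ℝ u z (EuclideanSpace.single i 1)) y (EuclideanSpace.single i 1)

/-- A ground state of the limit Lane-Emden system. -/
structure GroundState (N : ℕ) (p q : ℝ) where
  U : Euc N → ℝ
  V : Euc N → ℝ
  U_pos : ∀ y, 0 < U y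
  V_pos : ∀ y, 0 < V y
  U_c2 : ContDiff ℝ 2 U
  V_c2 : ContDiff ℝ 2 V
  U_radial : ∀ y z : Euc N, ‖y‖ = ‖z‖ → U y = U z
  V_radial : ∀ y z : Euc N, ‖y‖ = ‖z‖ → V y = V z
  U_decr : ∀ y z : Euc N, ‖y‖ ≤ ‖z‖ → U z ≤ U y
  V_decr : ∀ y z : Euc N, ‖y‖ ≤ ‖z‖ → V z ≤ V y
  U_mem : MemLp U (ENNReal.ofReal (q + 1)) volume
  V_mem : MemLp V (ENNReal.ofReal (p + 1)) volume
  U_vanish : Tendsto U (cocompact (Euc N)) (nhds 0)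
  V_vanish : Tendsto V (cocompact (Euc N)) (nhds 0)
  U_eq : ∀ y, - lapl U y = (V y) ^ p
  V_eq : ∀ y, - lapl V y = (U y) ^ q
  U_norm : U 0 = 1

def bubU {N : ℕ} {p q : ℝ} (g : GroundState N p q) (ξ : Euc N) (l : ℝ) (y : Euc N) : ℝ :=
  l ^ ((N : ℝ) / (q + 1)) * g.U (l • (y - ξ))

def bubV {N : ℕ} {p q : ℝ} (g : GroundState N p q) (ξ : Euc N) (l : ℝ) (y : Euc N) : ℝ :=
  l ^ ((N : ℝ) / (p + 1)) * g.V (l • (y - ξ))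

/-- Vertices of the regular `k`-gon of radius `r` in the `(y₁,y₂)`-plane. -/
def vtx (N k : ℕ) (r : ℝ) (j : ℕ) : Euc N :=
  (WithLp.equiv 2 (Fin N → ℝ)).symm fun i =>
    if (i : ℕ) = 0 then r * Real.cos (2 * π * j / k)
    else if (i : ℕ) = 1 then r * Real.sin (2 * π * j / k) else 0

def muk (N : ℕ) (m : ℝ) (k : ℕ) : ℝ := (k : ℝ) ^ (((N : ℝ) - 2) / ((N : ℝ) - 2 - m))

def W1 {N : ℕ} {p q : ℝ} (g : GroundState N p q) (k : ℕ) (r l : ℝ) (y : Euc N) : ℝ :=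
  ∑ j ∈ Finset.range k, bubU g (vtx N k r j) l y

def W2 {N : ℕ} {p q : ℝ} (g : GroundState N p q) (k : ℕ) (r l : ℝ) (y : Euc N) : ℝ :=
  ∑ j ∈ Finset.range k, bubV g (vtx N k r j) l y

def reflCoord {N : ℕ} (i : Fin N) (y : Euc N) : Euc N := y - EuclideanSpace.single i (2 * y i)

def rot2 {N : ℕ} (α : ℝ) (y : Euc N) : Euc N :=
  (WithLp.equiv 2 (Fin N → ℝ)).symm fun i =>
    if (i : ℕ) = 0 then Real.cos α * y i - Real.sin α * y ⟨1 % N, Nat.mod_lt 1 i.pos⟩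
    else if (i : ℕ) = 1 then Real.sin α * y ⟨0, i.pos⟩ + Real.cos α * y i
    else y i

/-- The symmetry class `H_s`: even in `y₂,…,y_N` and invariant under rotation by `2π/k` in
the `(y₁,y₂)`-plane. -/
def SymmPair {N : ℕ} (k : ℕ) (u₁ u₂ : Euc N → ℝ) : Prop :=
  (∀ i : Fin N, 1 ≤ (i : ℕ) → ∀ y, u₁ (reflCoord i y) = u₁ y ∧ u₂ (reflCoord i y) = u₂ y) ∧
  (∀ y, u₁ (rot2 (2 * π / k) y) = u₁ y ∧ u₂ (rot2 (2 * π / k) y) = u₂ y)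

/-- Weighted sup-norm, valued in `ℝ≥0∞`. -/
def wSup {N : ℕ} (w : Euc N → ℝ) (u : Euc N → ℝ) : ℝ≥0∞ :=
  ⨆ y, ENNReal.ofReal (|u y| / w y)

def wt {N : ℕ} (k : ℕ) (r σ : ℝ) (y : Euc N) : ℝ :=
  ∑ j ∈ Finset.range k, (1 + ‖y - vtx N k r j‖) ^ (-σ)

def sigb (N : ℕ) (η : ℝ) : ℝ := ((N : ℝ) - 2) / 2 + (1 + η)

def Yd {N : ℕ} {p q : ℝ} (g : GroundState N p q) (k : ℕ) (r l : ℝ) (j t : ℕ) (y : Euc N) : ℝ :=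
  if t = 0 then deriv (fun s => bubU g (vtx N k s j) l y) r
  else deriv (fun s => bubU g (vtx N k r j) s y) l

def Zd {N : ℕ} {p q : ℝ} (g : GroundState N p q) (k : ℕ) (r l : ℝ) (j t : ℕ) (y : Euc N) : ℝ :=
  if t = 0 then deriv (fun s => bubV g (vtx N k s j) l y) r
  else deriv (fun s => bubV g (vtx N k r j) s y) l

def Orth {N : ℕ} {p q : ℝ} (g : GroundState N p q) (k : ℕ) (r l : ℝ)
    (φ₁ φ₂ : Euc N → ℝ) : Prop :=
  ∀ j ∈ Finset.range k, ∀ t ∈ Finset.range 2,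
    ∫ y : Euc N, (p * (bubV g (vtx N k r j) l y) ^ (p - 1) * Zd g k r l j t y * φ₁ y
      + q * (bubU g (vtx N k r j) l y) ^ (q - 1) * Yd g k r l j t y * φ₂ y) = 0

def LinProb {N : ℕ} {p q : ℝ} (g : GroundState N p q) (K₁ K₂ : ℝ → ℝ) (k : ℕ) (r l μ : ℝ)
    (h₁ h₂ φ₁ φ₂ : Euc N → ℝ) (c : ℕ → ℝ) : Prop :=
  (∀ y : Euc N, - lapl φ₁ y - p * K₁ (‖y‖ / μ) * (W2 g k r l y) ^ (p - 1) * φ₂ y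
      = h₁ y + ∑ t ∈ Finset.range 2, c t *
          (p * ∑ j ∈ Finset.range k, (bubV g (vtx N k r j) l y) ^ (p - 1) * Zd g k r l j t y)) ∧
  (∀ y : Euc N, - lapl φ₂ y - q * K₂ (‖y‖ / μ) * (W1 g k r l y) ^ (q - 1) * φ₁ y
      = h₂ y + ∑ t ∈ Finset.range 2, c t *
          (q * ∑ j ∈ Finset.range k, (bubU g (vtx N k r j) l y) ^ (q - 1) * Yd g k r l j t y)) ∧
  SymmPair k φ₁ φ₂ ∧ Orth g k r l φ₁ φ₂

def NonlinProb {N : ℕ} {p q : ℝ} (g : GroundState N p q) (K₁ K₂ : ℝ → ℝ) (k : ℕ) (r l μ : ℝ)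
    (φ₁ φ₂ : Euc N → ℝ) (c : ℕ → ℝ) : Prop :=
  (∀ y : Euc N, - lapl (fun z => W1 g k r l z + φ₁ z) y
      = K₁ (‖y‖ / μ) * (W2 g k r l y + φ₂ y) ^ p
        + ∑ t ∈ Finset.range 2, c t *
            (p * ∑ j ∈ Finset.range k, (bubV g (vtx N k r j) l y) ^ (p - 1) * Zd g k r l j t y)) ∧
  (∀ y : Euc N, - lapl (fun z => W2 g k r l z + φ₂ z) y
      = K₂ (‖y‖ / μ) * (W1 g k r l y + φ₁ y) ^ q
        + ∑ t ∈ Finset.range 2, c t *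
            (q * ∑ j ∈ Finset.range k, (bubU g (vtx N k r j) l y) ^ (q - 1) * Yd g k r l j t y))

/-- Condition (K). -/
structure CondK (N : ℕ) (p : ℝ) (K₁ K₂ : ℝ → ℝ) (r₀ m₁ m₂ : ℝ) : Prop where
  cont₁ : Continuous K₁
  cont₂ : Continuous K₂
  pos₁ : ∀ r, 0 < K₁ r
  pos₂ : ∀ r, 0 < K₂ r
  hr₀ : 0 < r₀
  hm₁ : 2 ≤ m₁
  hm₁' : m₁ < (N : ℝ) - 2
  hm₂ : 2 ≤ m₂
  hm₂' : m₂ < (N : ℝ) - 2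
  hm₁₂ : m₁ ≤ m₂
  hmm : m₁ < (2 * p - 1) * ((N : ℝ) - 2) - 8
  expand : ∃ δ c₁ c₂ θ₁ θ₂ C : ℝ, 0 < δ ∧ 0 < c₁ ∧ 0 < c₂ ∧ 0 < θ₁ ∧ 0 < θ₂ ∧
    (∀ r : ℝ, |r - r₀| < δ →
      |K₁ r - (1 - c₁ * |r - r₀| ^ m₁)| ≤ C * |r - r₀| ^ (m₁ + θ₁)) ∧
    (∀ r : ℝ, |r - r₀| < δ →
      |K₂ r - (1 - c₂ * |r - r₀| ^ m₂)| ≤ C * |r - r₀| ^ (m₂ + θ₂))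

/-- Condition (P), with `m = m₁`. -/
def CondP (N : ℕ) (p m : ℝ) : Prop :=
  (N = 5 → 13 / 6 < p ∧ p ≤ 7 / 3) ∧
  (6 ≤ N → max (((N : ℝ) + 1) / ((N : ℝ) - 2))
      (((N : ℝ) * ((N : ℝ) - 2)) / (((N : ℝ) - 2) ^ 2 - ((N : ℝ) - 2 - m))) < p ∧
    p ≤ ((N : ℝ) + 2) / ((N : ℝ) - 2))

/-- `(p,q)` lies on the critical hyperbola, with `p ≤ (N+2)/(N-2) ≤ q`. -/
def Hyperbola (N : ℕ) (p q : ℝ) : Prop :=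
  1 < p ∧ 1 < q ∧ 1 / (p + 1) + 1 / (q + 1) = ((N : ℝ) - 2) / (N : ℝ) ∧
  p ≤ ((N : ℝ) + 2) / ((N : ℝ) - 2) ∧ ((N : ℝ) + 2) / ((N : ℝ) - 2) ≤ q

def IsRadial {N : ℕ} (u : Euc N → ℝ) : Prop := ∀ y z : Euc N, ‖y‖ = ‖z‖ → u y = u z

/-- The energy functional. -/
def energy {N : ℕ} (p q : ℝ) (K₁ K₂ : ℝ → ℝ) (μ : ℝ) (u v : Euc N → ℝ) : ℝ :=
  (∫ y : Euc N, ⟪gradient u y, gradient v y⟫) -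
    (1 / (p + 1)) * ∫ y : Euc N, K₁ (‖y‖ / μ) * |v y| ^ (p + 1) -
    (1 / (q + 1)) * ∫ y : Euc N, K₂ (‖y‖ / μ) * |u y| ^ (q + 1)


def rwt (N k : ℕ) (μ rb e σ : ℝ) (y : Euc N) : ℝ :=
  ∑ j ∈ Finset.range k, μ ^ e * (1 + μ * ‖y - vtx N k rb j‖) ^ (-σ)

def radLap (N : ℕ) (K : ℝ → ℝ) (r : ℝ) : ℝ :=
  deriv (deriv K) r + ((N : ℝ) - 1) / r * deriv K r

def Nt1 {N : ℕ} {p q : ℝ} (g : GroundState N p q) (K₁ : ℝ → ℝ) (k : ℕ) (r l μ : ℝ)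
    (φ₂ : Euc N → ℝ) (y : Euc N) : ℝ :=
  K₁ (‖y‖ / μ) *
    ((W2 g k r l y + φ₂ y) ^ p - (W2 g k r l y) ^ p - p * (W2 g k r l y) ^ (p - 1) * φ₂ y)

def Nt2 {N : ℕ} {p q : ℝ} (g : GroundState N p q) (K₂ : ℝ → ℝ) (k : ℕ) (r l μ : ℝ)
    (φ₁ : Euc N → ℝ) (y : Euc N) : ℝ :=
  K₂ (‖y‖ / μ) *
    ((W1 g k r l y + φ₁ y) ^ q - (W1 g k r l y) ^ q - q * (W1 g k r l y) ^ (q - 1) * φ₁ y)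

def Rt1 {N : ℕ} {p q : ℝ} (g : GroundState N p q) (K₁ : ℝ → ℝ) (k : ℕ) (r l μ : ℝ)
    (y : Euc N) : ℝ :=
  K₁ (‖y‖ / μ) * (W2 g k r l y) ^ p - ∑ j ∈ Finset.range k, (bubV g (vtx N k r j) l y) ^ p

def Rt2 {N : ℕ} {p q : ℝ} (g : GroundState N p q) (K₂ : ℝ → ℝ) (k : ℕ) (r l μ : ℝ)
    (y : Euc N) : ℝ :=
  K₂ (‖y‖ / μ) * (W1 g k r l y) ^ q - ∑ j ∈ Finset.range k, (bubU g (vtx N k r j) l y) ^ q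

open InnerProductSpace
lemma grad_coord {N : ℕ} (φ : Euc N → ℝ) (y : Euc N) (i : Fin N) :
    gradient φ y i = fderiv ℝ φ y (EuclideanSpace.single i 1) := by
  have h : ⟪gradient φ y, EuclideanSpace.single i (1:ℝ)⟫ = fderiv ℝ φ y (EuclideanSpace.single i 1) := by
    rw [gradient, toDual_symm_apply]
  rw [EuclideanSpace.inner_single_right] at h
  simpa using h

lemma inner_grad_eq {N : ℕ} (u w : Euc N → ℝ) (y : Euc N) :
    ⟪gradient u y, gradient w y⟫ =
      ∑ i : Fin N, fderiv ℝ u y (EuclideanSpace.single i 1) * fderiv ℝ w y (EuclideanSpace.single i 1) := by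
  rw [PiLp.inner_apply]
  simp [grad_coord]
  exact Finset.sum_congr rfl fun i _ => mul_comm _ _

lemma norm_gradient_eq {N : ℕ} (u : Euc N → ℝ) (y : Euc N) :
    ‖gradient u y‖ = ‖fderiv ℝ u y‖ := by
  rw [gradient]; exact (toDual ℝ (Euc N)).symm.norm_map _

lemma key_ibp {N : ℕ} (hN : 3 ≤ N) (u w : Euc N → ℝ) (hu : ContDiff ℝ 2 u) (hw : ContDiff ℝ 2 w)
    (C : ℝ)
    (hub : ∀ y, |u y| ≤ C * (1 + ‖y‖) ^ (-((N:ℝ) - 2)))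
    (hwg : ∀ y, ‖fderiv ℝ w y‖ ≤ C * (1 + ‖y‖) ^ (-((N:ℝ) - 1)))
    (hdiv : Integrable (fun y => ⟪gradient u y, gradient w y⟫ + u y * lapl w y) volume) :
    ∫ y, (⟪gradient u y, gradient w y⟫ + u y * lapl w y) = 0 := by
  have hC : 0 ≤ C := le_trans (abs_nonneg (u 0)) (by simpa using hub 0)
  obtain ⟨n, rfl⟩ : ∃ n, N = n + 1 := ⟨N - 1, by omega⟩
  letI : PartialOrder (Euc (n+1)) := PartialOrder.lift WithLp.ofLp (WithLp.ofLp_injective 2)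
  set eL : Euc (n+1) ≃L[ℝ] (Fin (n+1) → ℝ) := EuclideanSpace.equiv _ ℝ with heL
  set E : Fin (n+1) → Euc (n+1) := fun i => EuclideanSpace.single i 1 with hE
  set g : Fin (n+1) → Euc (n+1) → ℝ := fun i z => fderiv ℝ w z (E i) with hg
  have hgC : ∀ i, ContDiff ℝ 1 (g i) := fun i =>
    (ContinuousLinearMap.apply ℝ ℝ (E i)).contDiff.comp (hw.fderiv_right (le_refl _))
  set f : Fin (n+1) → Euc (n+1) → ℝ := fun i y => u y * g i y with hf
  set f' : Fin (n+1) → Euc (n+1) → Euc (n+1) →L[ℝ] ℝ :=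
    fun i y => u y • fderiv ℝ (g i) y + g i y • fderiv ℝ u y with hf'
  have hud : Differentiable ℝ u := hu.differentiable (by norm_num)
  have hderiv : ∀ i y, HasFDerivAt (f i) (f' i y) y := fun i y =>
    (hud y).hasFDerivAt.mul ((hgC i).differentiable one_ne_zero y).hasFDerivAt
  set DF : Euc (n+1) → ℝ := fun y => ⟪gradient u y, gradient w y⟫ + u y * lapl w y with hDFdef
  have hDF : ∀ y, DF y = ∑ i, f' i y (eL.symm (Pi.single i 1)) := by
    intro y
    have h1 : ∀ i : Fin (n+1), (eL.symm (Pi.single i 1) : Euc (n+1)) = E i := fun i => rfl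
    simp only [h1, hf', ContinuousLinearMap.add_apply, ContinuousLinearMap.smul_apply,
      smul_eq_mul]
    rw [Finset.sum_add_distrib, ← Finset.mul_sum]
    have hsum : ∑ x : Fin (n+1), g x y * fderiv ℝ u y (E x)
        = ∑ x : Fin (n+1), fderiv ℝ u y (EuclideanSpace.single x 1) *
            fderiv ℝ w y (EuclideanSpace.single x 1) :=
      Finset.sum_congr rfl fun i _ => mul_comm _ _
    rw [hsum]
    have hlap : lapl w y = ∑ i : Fin (n+1), fderiv ℝ (g i) y (E i) := rfl
    show ⟪gradient u y, gradient w y⟫ + u y * lapl w y = _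
    rw [inner_grad_eq u w y, hlap]
    ring
  -- the box estimate
  have hn2 : (2:ℝ) ≤ (n:ℝ) := by
    have : 2 ≤ n := by omega
    exact_mod_cast this
  have key : ∀ R : ℝ, 0 < R →
      |∫ y in Set.Icc (eL.symm (fun _ => -R)) (eL.symm (fun _ => R)), DF y|
        ≤ ((n:ℝ)+1) * 2 * (C^2 * 2^n) * (1+R) ^ (-((n:ℝ)-1)) := by
    intro R hR
    set a : Euc (n+1) := eL.symm (fun _ => -R) with ha
    set b : Euc (n+1) := eL.symm (fun _ => R) with hb
    have hle : a ≤ b := by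
      intro i
      show -R ≤ R
      linarith
    have heq := integral_divergence_of_hasFDerivAt_off_countable_of_equiv eL
      (fun x y => Iff.rfl) (EuclideanSpace.volume_preserving_symm_measurableEquiv_toLp _)
      f f' ∅ Set.countable_empty a b hle
      (fun i => (hud.continuous.mul (hgC i).continuous).continuousOn)
      (fun x _ i => hderiv i x) DF hDF hdiv.integrableOn
    rw [heq]
    -- bound each face integral
    have hface : ∀ (i : Fin (n+1)) (c : ℝ), |c| = R →
        |∫ x in Set.Icc (eL a ∘ i.succAbove) (eL b ∘ i.succAbove),
            f i (eL.symm (i.insertNth c x))|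
          ≤ (C^2 * 2^n) * (1+R) ^ (-((n:ℝ)-1)) := by
      intro i c hc
      have hbound : ∀ x ∈ Set.Icc (eL a ∘ i.succAbove) (eL b ∘ i.succAbove),
          ‖f i (eL.symm (i.insertNth c x))‖ ≤ C^2 * (1+R) ^ (-(2*((n:ℝ)+1)-3)) := by
        intro x _
        set y : Euc (n+1) := eL.symm (i.insertNth c x) with hy
        have hyR : R ≤ ‖y‖ := by
          have h1 : |y i| ≤ ‖y‖ := by
            have h2 := abs_real_inner_le_norm y (EuclideanSpace.single i (1:ℝ))
            simpa [EuclideanSpace.inner_single_right, EuclideanSpace.norm_single] using h2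
          have h3 : y i = c := by
            show (i.insertNth c x : Fin (n+1) → ℝ) i = c
            simp
          rw [h3, hc] at h1
          exact h1
        have h4 : ‖f i y‖ ≤ (C * (1+‖y‖) ^ (-((n:ℝ)+1-2))) * (C * (1+‖y‖) ^ (-((n:ℝ)+1-1))) := by
          have h5 : ‖f i y‖ = |u y| * |g i y| := abs_mul _ _
          have h6 : |g i y| ≤ ‖fderiv ℝ w y‖ := by
            calc |g i y| ≤ ‖fderiv ℝ w y‖ * ‖E i‖ := (fderiv ℝ w y).le_opNorm _
            _ = ‖fderiv ℝ w y‖ := by simp [hE, EuclideanSpace.norm_single]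
          rw [h5]
          have hub' := hub y
          have hwg' := hwg y
          push_cast at hub' hwg'
          exact mul_le_mul hub' (le_trans h6 hwg') (abs_nonneg _)
            (by positivity)
        have h7 : (C * (1+‖y‖) ^ (-((n:ℝ)+1-2))) * (C * (1+‖y‖) ^ (-((n:ℝ)+1-1)))
            = C^2 * (1+‖y‖) ^ (-(2*((n:ℝ)+1)-3)) := by
          rw [show (-(2*((n:ℝ)+1)-3)) = (-((n:ℝ)+1-2)) + (-((n:ℝ)+1-1)) by ring,
            Real.rpow_add (by positivity)]
          ring
        have h8 : (1+‖y‖ : ℝ) ^ (-(2*((n:ℝ)+1)-3)) ≤ (1+R) ^ (-(2*((n:ℝ)+1)-3)) :=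
          Real.rpow_le_rpow_of_nonpos (by linarith)
            (by linarith) (by linarith)
        calc ‖f i y‖ ≤ C^2 * (1+‖y‖) ^ (-(2*((n:ℝ)+1)-3)) := by rw [← h7]; exact h4
        _ ≤ C^2 * (1+R) ^ (-(2*((n:ℝ)+1)-3)) := by
            exact mul_le_mul_of_nonneg_left h8 (by positivity)
      have hIccvol : volume (Set.Icc (eL a ∘ i.succAbove) (eL b ∘ i.succAbove)) < ⊤ := by
        exact (measure_Icc_lt_top)
      have hmeas : AEStronglyMeasurable
          (fun x => f i (eL.symm (i.insertNth c x)))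
          (volume.restrict (Set.Icc (eL a ∘ i.succAbove) (eL b ∘ i.succAbove))) := by
        apply Continuous.aestronglyMeasurable
        exact (hud.continuous.mul (hgC i).continuous).comp
          (eL.symm.continuous.comp (continuous_const.finInsertNth i continuous_id))
      have := norm_setIntegral_le_of_norm_le_const hIccvol hbound; rw [measureReal_def] at this
      have hvol : (volume (Set.Icc (eL a ∘ i.succAbove) (eL b ∘ i.succAbove))).toReal
          = (2*R)^n := by
        rw [Real.volume_Icc_pi_toReal (by intro j; show -R ≤ R; linarith)]
        have : ∀ j : Fin n, ((eL b ∘ i.succAbove) j - (eL a ∘ i.succAbove) j) = 2*R := by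
          intro j; show R - (-R) = 2*R; ring
        rw [Finset.prod_congr rfl (fun j _ => this j)]
        simp
      rw [hvol] at this
      calc |∫ x in Set.Icc (eL a ∘ i.succAbove) (eL b ∘ i.succAbove),
            f i (eL.symm (i.insertNth c x))|
          ≤ C^2 * (1+R) ^ (-(2*((n:ℝ)+1)-3)) * (2*R)^n := this
        _ ≤ (C^2 * 2^n) * (1+R) ^ (-((n:ℝ)-1)) := by
            have h9 : ((2*R)^n : ℝ) ≤ 2^n * (1+R)^(n:ℝ) := by
              rw [Real.rpow_natCast, ← mul_pow]
              exact pow_le_pow_left₀ (by linarith) (by linarith) n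
            have h10 : (1+R:ℝ) ^ (-(2*((n:ℝ)+1)-3)) * (1+R)^(n:ℝ) = (1+R) ^ (-((n:ℝ)-1)) := by
              rw [← Real.rpow_add (by linarith)]
              ring_nf
            calc C^2 * (1+R) ^ (-(2*((n:ℝ)+1)-3)) * (2*R)^n
                ≤ C^2 * (1+R) ^ (-(2*((n:ℝ)+1)-3)) * (2^n * (1+R)^(n:ℝ)) := by
                  apply mul_le_mul_of_nonneg_left h9 (by positivity)
              _ = (C^2 * 2^n) * ((1+R) ^ (-(2*((n:ℝ)+1)-3)) * (1+R)^(n:ℝ)) := by ring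
              _ = (C^2 * 2^n) * (1+R) ^ (-((n:ℝ)-1)) := by rw [h10]
    calc |∑ i : Fin (n+1),
          ((∫ x in Set.Icc (eL a ∘ i.succAbove) (eL b ∘ i.succAbove),
              f i (eL.symm (i.insertNth (eL b i) x))) -
            ∫ x in Set.Icc (eL a ∘ i.succAbove) (eL b ∘ i.succAbove),
              f i (eL.symm (i.insertNth (eL a i) x)))|
        ≤ ∑ i : Fin (n+1),
          |((∫ x in Set.Icc (eL a ∘ i.succAbove) (eL b ∘ i.succAbove),
              f i (eL.symm (i.insertNth (eL b i) x))) -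
            ∫ x in Set.Icc (eL a ∘ i.succAbove) (eL b ∘ i.succAbove),
              f i (eL.symm (i.insertNth (eL a i) x)))| := Finset.abs_sum_le_sum_abs _ _
      _ ≤ ∑ i : Fin (n+1), (2 * ((C^2 * 2^n) * (1+R) ^ (-((n:ℝ)-1)))) := by
          apply Finset.sum_le_sum
          intro i _
          have hbi : eL b i = R := rfl
          have hai : eL a i = -R := rfl
          have t1 := hface i (eL b i) (by rw [hbi]; exact abs_of_pos hR)
          have t2 := hface i (eL a i) (by rw [hai]; rw [abs_neg]; exact abs_of_pos hR)
          exact (abs_sub _ _).trans (by linarith)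
      _ = ((n:ℝ)+1) * 2 * (C^2 * 2^n) * (1+R) ^ (-((n:ℝ)-1)) := by
          rw [Finset.sum_const]
          simp only [Finset.card_univ, Fintype.card_fin, nsmul_eq_mul]
          push_cast
          ring
  -- pass to the limit
  set box : ℕ → Set (Euc (n+1)) := fun m =>
    Set.Icc (eL.symm (fun _ => -((m:ℝ)+1))) (eL.symm (fun _ => ((m:ℝ)+1))) with hbox
  have hmeas : ∀ m, MeasurableSet (box m) := by
    intro m
    have : box m = eL ⁻¹' Set.Icc (fun _ => -((m:ℝ)+1)) (fun _ => ((m:ℝ)+1)) := rfl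
    rw [this]
    exact measurableSet_Icc.preimage eL.continuous.measurable
  have hmono : Monotone box := by
    intro m m' hmm'
    apply Set.Icc_subset_Icc
    · intro i
      show -((m':ℝ)+1) ≤ -((m:ℝ)+1)
      have : (m:ℝ) ≤ m' := by exact_mod_cast hmm'
      linarith
    · intro i
      show ((m:ℝ)+1) ≤ ((m':ℝ)+1)
      have : (m:ℝ) ≤ m' := by exact_mod_cast hmm'
      linarith
  have hunion : (⋃ m, box m) = Set.univ := by
    ext y
    simp only [Set.mem_iUnion, Set.mem_univ, iff_true]
    refine ⟨⌈‖y‖⌉₊, ?_, ?_⟩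
    · intro i
      show -((⌈‖y‖⌉₊:ℝ)+1) ≤ y i
      have h1 : |y i| ≤ ‖y‖ := by
        have h2 := abs_real_inner_le_norm y (EuclideanSpace.single i (1:ℝ))
        simpa [EuclideanSpace.inner_single_right, EuclideanSpace.norm_single] using h2
      have h3 : ‖y‖ ≤ ⌈‖y‖⌉₊ := Nat.le_ceil _
      have := abs_le.1 h1
      linarith [this.1]
    · intro i
      show y i ≤ ((⌈‖y‖⌉₊:ℝ)+1)
      have h1 : |y i| ≤ ‖y‖ := by
        have h2 := abs_real_inner_le_norm y (EuclideanSpace.single i (1:ℝ))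
        simpa [EuclideanSpace.inner_single_right, EuclideanSpace.norm_single] using h2
      have h3 : ‖y‖ ≤ ⌈‖y‖⌉₊ := Nat.le_ceil _
      have := abs_le.1 h1
      linarith [this.2]
  have h1 : Tendsto (fun m => ∫ y in box m, DF y) atTop (nhds (∫ y, DF y)) := by
    have := MeasureTheory.tendsto_setIntegral_of_monotone hmeas hmono
      (by rw [hunion]; exact hdiv.integrableOn)
    rw [hunion, MeasureTheory.setIntegral_univ] at this
    exact this
  have h2 : Tendsto (fun m => ∫ y in box m, DF y) atTop (nhds 0) := by
    apply squeeze_zero_norm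
      (a := fun m : ℕ => ((n:ℝ)+1) * 2 * (C^2 * 2^n) * (1+((m:ℝ)+1)) ^ (-((n:ℝ)-1)))
      (fun m => by rw [Real.norm_eq_abs]; exact key ((m:ℝ)+1) (by positivity))
    have hexp : (0:ℝ) < (n:ℝ) - 1 := by linarith
    have ht1 : Tendsto (fun m : ℕ => (1+((m:ℝ)+1))) atTop atTop := by
      apply Filter.tendsto_atTop_add_const_left
      apply Filter.tendsto_atTop_add_const_right
      exact tendsto_natCast_atTop_atTop
    have ht2 : Tendsto (fun m : ℕ => (1+((m:ℝ)+1)) ^ (-((n:ℝ)-1))) atTop (nhds 0) :=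
      (tendsto_rpow_neg_atTop hexp).comp ht1
    have h3 := ht2.const_mul (((n:ℝ)+1) * 2 * (C^2 * 2^n))
    rw [mul_zero] at h3
    exact h3
  exact tendsto_nhds_unique h1 h2

lemma integrable_of_decay {N : ℕ} (f : Euc N → ℝ) (hf : Continuous f)
    (c r : ℝ) (hr : (N:ℝ) < r) (hb : ∀ y, |f y| ≤ c * (1 + ‖y‖) ^ (-r)) :
    Integrable f volume := by
  have hint : Integrable (fun y : Euc N => c * (1 + ‖y‖) ^ (-r)) volume := by
    apply Integrable.const_mul
    apply integrable_one_add_norm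
    rwa [finrank_euclideanSpace_fin]
  exact hint.mono' hf.aestronglyMeasurable (Eventually.of_forall (fun y => by
    rw [Real.norm_eq_abs]; exact hb y))

lemma inner_grad_continuous {N : ℕ} (u w : Euc N → ℝ) (hu : ContDiff ℝ 2 u)
    (hw : ContDiff ℝ 2 w) :
    Continuous (fun y => ⟪gradient u y, gradient w y⟫) := by
  have h1 : Continuous (gradient u) := by
    have := hu.continuous_fderiv (by norm_num)
    exact (toDual ℝ (Euc N)).symm.continuous.comp this
  have h2 : Continuous (gradient w) := by
    have := hw.continuous_fderiv (by norm_num)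
    exact (toDual ℝ (Euc N)).symm.continuous.comp this
  exact h1.inner h2

lemma ibp_eq {N : ℕ} (hN : 3 ≤ N) (u w : Euc N → ℝ) (hu : ContDiff ℝ 2 u) (hw : ContDiff ℝ 2 w)
    (C : ℝ) (hC : 0 ≤ C)
    (hub : ∀ y, |u y| ≤ C * (1 + ‖y‖) ^ (-((N:ℝ) - 2)))
    (hug : ∀ y, ‖gradient u y‖ ≤ C * (1 + ‖y‖) ^ (-((N:ℝ) - 1)))
    (hwg : ∀ y, ‖gradient w y‖ ≤ C * (1 + ‖y‖) ^ (-((N:ℝ) - 1)))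
    (hlap : Integrable (fun y => u y * lapl w y) volume) :
    Integrable (fun y => ⟪gradient u y, gradient w y⟫) volume ∧
    ∫ y, ⟪gradient u y, gradient w y⟫ = - ∫ y, u y * lapl w y := by
  have hN3 : (3:ℝ) ≤ (N:ℝ) := by exact_mod_cast hN
  have hinner : Integrable (fun y => ⟪gradient u y, gradient w y⟫) volume := by
    apply integrable_of_decay _ (inner_grad_continuous u w hu hw) (C*C) (2*((N:ℝ)-1))
      (by linarith)
    intro y
    have h1 : |⟪gradient u y, gradient w y⟫| ≤ ‖gradient u y‖ * ‖gradient w y‖ :=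
      abs_real_inner_le_norm _ _
    have h2 : ‖gradient u y‖ * ‖gradient w y‖
        ≤ (C * (1 + ‖y‖) ^ (-((N:ℝ) - 1))) * (C * (1 + ‖y‖) ^ (-((N:ℝ) - 1))) :=
      mul_le_mul (hug y) (hwg y) (norm_nonneg _) (by positivity)
    have h3 : (C * (1 + ‖y‖) ^ (-((N:ℝ) - 1))) * (C * (1 + ‖y‖) ^ (-((N:ℝ) - 1)))
        = C * C * (1 + ‖y‖) ^ (-(2*((N:ℝ)-1))) := by
      rw [show (-(2*((N:ℝ)-1))) = (-((N:ℝ)-1)) + (-((N:ℝ)-1)) by ring,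
        Real.rpow_add (by positivity)]
      ring
    linarith
  refine ⟨hinner, ?_⟩
  have hwg' : ∀ y, ‖fderiv ℝ w y‖ ≤ C * (1 + ‖y‖) ^ (-((N:ℝ) - 1)) := by
    intro y; rw [← norm_gradient_eq]; exact hwg y
  have h0 := key_ibp hN u w hu hw C hub hwg' (hinner.add hlap)
  rw [integral_add hinner hlap] at h0
  linarith

lemma triple_bound {N : ℕ} (M C e : ℝ) (hM : 0 ≤ M) (hC : 0 ≤ C) (he : 0 < e)
    (K v z : Euc N → ℝ)
    (hK : ∀ y, |K y| ≤ M) (hv : ∀ y, 0 < v y)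
    (hvb : ∀ y, |v y| ≤ C * (1+‖y‖)^(-((N:ℝ)-2)))
    (hzb : ∀ y, |z y| ≤ C * (1+‖y‖)^(-((N:ℝ)-2))) (y : Euc N) :
    |K y * v y ^ e * z y| ≤ M * C^e * C * (1+‖y‖)^(-(((N:ℝ)-2)*(e+1))) := by
  have hT0 : (0:ℝ) < 1 + ‖y‖ := by positivity
  have h1 : |v y ^ e| ≤ C^e * (1+‖y‖)^(-(((N:ℝ)-2)*e)) := by
    rw [abs_of_pos (Real.rpow_pos_of_pos (hv y) e)]
    calc v y ^ e ≤ (C * (1+‖y‖)^(-((N:ℝ)-2)))^e :=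
          Real.rpow_le_rpow (le_of_lt (hv y))
            (by have := hvb y; rwa [abs_of_pos (hv y)] at this) (le_of_lt he)
      _ = C^e * (1+‖y‖)^(-(((N:ℝ)-2)*e)) := by
          rw [Real.mul_rpow hC (Real.rpow_nonneg (le_of_lt hT0) _),
            ← Real.rpow_mul (le_of_lt hT0), neg_mul]
  rw [abs_mul, abs_mul]
  calc |K y| * |v y ^ e| * |z y|
      ≤ M * (C^e * (1+‖y‖)^(-(((N:ℝ)-2)*e))) * (C * (1+‖y‖)^(-((N:ℝ)-2))) := by
        apply mul_le_mul (mul_le_mul (hK y) h1 (abs_nonneg _) hM) (hzb y) (abs_nonneg _)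
          (by positivity)
    _ = M * C^e * C * (1+‖y‖)^(-(((N:ℝ)-2)*(e+1))) := by
        rw [show (-(((N:ℝ)-2)*(e+1))) = (-(((N:ℝ)-2)*e)) + (-((N:ℝ)-2)) by ring,
          Real.rpow_add hT0]
        ring

theorem statement14 (N : ℕ) (hN : 3 ≤ N) (p q : ℝ) (hp : 1 < p) (hq : 1 < q)
    (hpq : 1 / (p + 1) + 1 / (q + 1) = ((N : ℝ) - 2) / (N : ℝ))
    (K₁ K₂ : Euc N → ℝ) (hK₁c : Continuous K₁) (hK₂c : Continuous K₂)
    (hKb : ∃ M : ℝ, ∀ y, |K₁ y| ≤ M ∧ |K₂ y| ≤ M)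
    (v₁ v₂ ξ₁ ξ₂ : Euc N → ℝ)
    (hv₁ : ContDiff ℝ 2 v₁) (hv₂ : ContDiff ℝ 2 v₂)
    (hξ₁ : ContDiff ℝ 2 ξ₁) (hξ₂ : ContDiff ℝ 2 ξ₂)
    (hv₁p : ∀ y, 0 < v₁ y) (hv₂p : ∀ y, 0 < v₂ y)
    (he₁ : ∀ y, - lapl v₁ y = K₁ y * (v₂ y) ^ p)
    (he₂ : ∀ y, - lapl v₂ y = K₂ y * (v₁ y) ^ q)
    (hl₁ : ∀ y, - lapl ξ₁ y = p * K₁ y * (v₂ y) ^ (p - 1) * ξ₂ y)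
    (hl₂ : ∀ y, - lapl ξ₂ y = q * K₂ y * (v₁ y) ^ (q - 1) * ξ₁ y)
    (C : ℝ)
    (hdec : ∀ y : Euc N,
      |v₁ y| + |ξ₁ y| ≤ C * (1 + ‖y‖) ^ (-((N : ℝ) - 2)) ∧
      |v₂ y| + |ξ₂ y| ≤ C * (1 + ‖y‖) ^ (-((N : ℝ) - 2)))
    (hgdec : ∀ y : Euc N,
      ‖gradient v₁ y‖ + ‖gradient ξ₁ y‖ ≤ C * (1 + ‖y‖) ^ (-((N : ℝ) - 1)) ∧
      ‖gradient v₂ y‖ + ‖gradient ξ₂ y‖ ≤ C * (1 + ‖y‖) ^ (-((N : ℝ) - 1))) :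
    Integrable (fun y : Euc N => ⟪gradient v₁ y, gradient ξ₂ y⟫) volume ∧
    Integrable (fun y : Euc N => ⟪gradient v₂ y, gradient ξ₁ y⟫) volume ∧
    Integrable (fun y : Euc N => K₁ y * (v₂ y) ^ p * ξ₂ y) volume ∧
    Integrable (fun y : Euc N => K₂ y * (v₁ y) ^ q * ξ₁ y) volume ∧
    ((N : ℝ) - 2) *
        ∫ y : Euc N, (⟪gradient v₁ y, gradient ξ₂ y⟫ + ⟪gradient v₂ y, gradient ξ₁ y⟫)
      = (N : ℝ) * ∫ y : Euc N, (K₁ y * (v₂ y) ^ p * ξ₂ y + K₂ y * (v₁ y) ^ q * ξ₁ y) := by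
  obtain ⟨M, hM⟩ := hKb
  have hM0 : 0 ≤ M := le_trans (abs_nonneg _) (hM 0).1
  have hN3 : (3:ℝ) ≤ (N:ℝ) := by exact_mod_cast hN
  have hC : 0 ≤ C := by
    have h := (hdec (0 : Euc N)).1
    simp only [norm_zero, add_zero, Real.one_rpow, mul_one] at h
    nlinarith [abs_nonneg (v₁ 0), abs_nonneg (ξ₁ 0)]
  -- individual decay bounds
  have hv₁b : ∀ y : Euc N, |v₁ y| ≤ C * (1+‖y‖)^(-((N:ℝ)-2)) :=
    fun y => le_trans (le_add_of_nonneg_right (abs_nonneg _)) (hdec y).1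
  have hξ₁b : ∀ y : Euc N, |ξ₁ y| ≤ C * (1+‖y‖)^(-((N:ℝ)-2)) :=
    fun y => le_trans (le_add_of_nonneg_left (abs_nonneg _)) (hdec y).1
  have hv₂b : ∀ y : Euc N, |v₂ y| ≤ C * (1+‖y‖)^(-((N:ℝ)-2)) :=
    fun y => le_trans (le_add_of_nonneg_right (abs_nonneg _)) (hdec y).2
  have hξ₂b : ∀ y : Euc N, |ξ₂ y| ≤ C * (1+‖y‖)^(-((N:ℝ)-2)) :=
    fun y => le_trans (le_add_of_nonneg_left (abs_nonneg _)) (hdec y).2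
  have hv₁g : ∀ y : Euc N, ‖gradient v₁ y‖ ≤ C * (1+‖y‖)^(-((N:ℝ)-1)) :=
    fun y => le_trans (le_add_of_nonneg_right (norm_nonneg _)) (hgdec y).1
  have hξ₁g : ∀ y : Euc N, ‖gradient ξ₁ y‖ ≤ C * (1+‖y‖)^(-((N:ℝ)-1)) :=
    fun y => le_trans (le_add_of_nonneg_left (norm_nonneg _)) (hgdec y).1
  have hv₂g : ∀ y : Euc N, ‖gradient v₂ y‖ ≤ C * (1+‖y‖)^(-((N:ℝ)-1)) :=
    fun y => le_trans (le_add_of_nonneg_right (norm_nonneg _)) (hgdec y).2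
  have hξ₂g : ∀ y : Euc N, ‖gradient ξ₂ y‖ ≤ C * (1+‖y‖)^(-((N:ℝ)-1)) :=
    fun y => le_trans (le_add_of_nonneg_left (norm_nonneg _)) (hgdec y).2
  -- exponent facts
  have hp0 : (0:ℝ) < p + 1 := by linarith
  have hq0 : (0:ℝ) < q + 1 := by linarith
  have hNpos : (0:ℝ) < (N:ℝ) := by linarith
  have hNp : (N:ℝ) < ((N:ℝ)-2) * (p+1) := by
    have h1 : 1/(p+1) < ((N:ℝ)-2)/(N:ℝ) := by
      have h2 : 0 < 1/(q+1) := by positivity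
      linarith [hpq]
    rw [div_lt_div_iff₀ hp0 hNpos] at h1
    linarith
  have hNq : (N:ℝ) < ((N:ℝ)-2) * (q+1) := by
    have h1 : 1/(q+1) < ((N:ℝ)-2)/(N:ℝ) := by
      have h2 : 0 < 1/(p+1) := by positivity
      linarith [hpq]
    rw [div_lt_div_iff₀ hq0 hNpos] at h1
    linarith
  -- integrability of the nonlinear terms
  have hfA : Integrable (fun y : Euc N => K₁ y * v₂ y ^ p * ξ₂ y) volume := by
    apply integrable_of_decay _
      ((hK₁c.mul (hv₂.continuous.rpow_const
        (fun y => Or.inl (ne_of_gt (hv₂p y))))).mul hξ₂.continuous)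
      (M * C^p * C) (((N:ℝ)-2)*(p+1)) hNp
    exact triple_bound M C p hM0 hC (by linarith) K₁ v₂ ξ₂ (fun y => (hM y).1) hv₂p hv₂b hξ₂b
  have hfB : Integrable (fun y : Euc N => K₂ y * v₁ y ^ q * ξ₁ y) volume := by
    apply integrable_of_decay _
      ((hK₂c.mul (hv₁.continuous.rpow_const
        (fun y => Or.inl (ne_of_gt (hv₁p y))))).mul hξ₁.continuous)
      (M * C^q * C) (((N:ℝ)-2)*(q+1)) hNq
    exact triple_bound M C q hM0 hC (by linarith) K₂ v₁ ξ₁ (fun y => (hM y).2) hv₁p hv₁b hξ₁b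
  -- rpow splitting
  have hrq : ∀ y : Euc N, v₁ y ^ q = v₁ y ^ (q-1) * v₁ y := by
    intro y
    conv_lhs => rw [show q = q-1+1 by ring]
    rw [Real.rpow_add (hv₁p y), Real.rpow_one]
  have hrp : ∀ y : Euc N, v₂ y ^ p = v₂ y ^ (p-1) * v₂ y := by
    intro y
    conv_lhs => rw [show p = p-1+1 by ring]
    rw [Real.rpow_add (hv₂p y), Real.rpow_one]
  -- pair 1 : u = v₁, w = ξ₂
  have heq1 : (fun y : Euc N => v₁ y * lapl ξ₂ y)
      = (fun y => -(q * (K₂ y * v₁ y ^ q * ξ₁ y))) := by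
    funext y
    have h := hl₂ y
    have hl : lapl ξ₂ y = -(q * K₂ y * v₁ y ^ (q-1) * ξ₁ y) := by linarith
    rw [hl, hrq y]; ring
  have hlap1 : Integrable (fun y : Euc N => v₁ y * lapl ξ₂ y) volume := by
    rw [heq1]; exact (hfB.const_mul q).neg
  obtain ⟨Int1, E1⟩ := ibp_eq hN v₁ ξ₂ hv₁ hξ₂ C hC hv₁b hv₁g hξ₂g hlap1
  have E1' : (∫ y : Euc N, ⟪gradient v₁ y, gradient ξ₂ y⟫)
      = q * ∫ y : Euc N, K₂ y * v₁ y ^ q * ξ₁ y := by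
    rw [E1, heq1, integral_neg, neg_neg, MeasureTheory.integral_const_mul]
  -- pair 2 : u = ξ₂, w = v₁
  have heq2 : (fun y : Euc N => ξ₂ y * lapl v₁ y)
      = (fun y => -(K₁ y * v₂ y ^ p * ξ₂ y)) := by
    funext y
    have h := he₁ y
    have hl : lapl v₁ y = -(K₁ y * v₂ y ^ p) := by linarith
    rw [hl]; ring
  have hlap2 : Integrable (fun y : Euc N => ξ₂ y * lapl v₁ y) volume := by
    rw [heq2]; exact hfA.neg
  obtain ⟨Int2, E2⟩ := ibp_eq hN ξ₂ v₁ hξ₂ hv₁ C hC hξ₂b hξ₂g hv₁g hlap2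
  have E2' : (∫ y : Euc N, ⟪gradient v₁ y, gradient ξ₂ y⟫)
      = ∫ y : Euc N, K₁ y * v₂ y ^ p * ξ₂ y := by
    have hsym : (∫ y : Euc N, ⟪gradient ξ₂ y, gradient v₁ y⟫)
        = ∫ y : Euc N, ⟪gradient v₁ y, gradient ξ₂ y⟫ := by
      congr 1; funext y; exact real_inner_comm _ _
    rw [← hsym, E2, heq2, integral_neg, neg_neg]
  -- pair 3 : u = v₂, w = ξ₁
  have heq3 : (fun y : Euc N => v₂ y * lapl ξ₁ y)
      = (fun y => -(p * (K₁ y * v₂ y ^ p * ξ₂ y))) := by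
    funext y
    have h := hl₁ y
    have hl : lapl ξ₁ y = -(p * K₁ y * v₂ y ^ (p-1) * ξ₂ y) := by linarith
    rw [hl, hrp y]; ring
  have hlap3 : Integrable (fun y : Euc N => v₂ y * lapl ξ₁ y) volume := by
    rw [heq3]; exact (hfA.const_mul p).neg
  obtain ⟨Int3, E3⟩ := ibp_eq hN v₂ ξ₁ hv₂ hξ₁ C hC hv₂b hv₂g hξ₁g hlap3
  have E3' : (∫ y : Euc N, ⟪gradient v₂ y, gradient ξ₁ y⟫)
      = p * ∫ y : Euc N, K₁ y * v₂ y ^ p * ξ₂ y := by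
    rw [E3, heq3, integral_neg, neg_neg, MeasureTheory.integral_const_mul]
  -- pair 4 : u = ξ₁, w = v₂
  have heq4 : (fun y : Euc N => ξ₁ y * lapl v₂ y)
      = (fun y => -(K₂ y * v₁ y ^ q * ξ₁ y)) := by
    funext y
    have h := he₂ y
    have hl : lapl v₂ y = -(K₂ y * v₁ y ^ q) := by linarith
    rw [hl]; ring
  have hlap4 : Integrable (fun y : Euc N => ξ₁ y * lapl v₂ y) volume := by
    rw [heq4]; exact hfB.neg
  obtain ⟨Int4, E4⟩ := ibp_eq hN ξ₁ v₂ hξ₁ hv₂ C hC hξ₁b hξ₁g hv₂g hlap4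
  have E4' : (∫ y : Euc N, ⟪gradient v₂ y, gradient ξ₁ y⟫)
      = ∫ y : Euc N, K₂ y * v₁ y ^ q * ξ₁ y := by
    have hsym : (∫ y : Euc N, ⟪gradient ξ₁ y, gradient v₂ y⟫)
        = ∫ y : Euc N, ⟪gradient v₂ y, gradient ξ₁ y⟫ := by
      congr 1; funext y; exact real_inner_comm _ _
    rw [← hsym, E4, heq4, integral_neg, neg_neg]
  -- conclude A = B = 0
  set A := ∫ y : Euc N, K₁ y * v₂ y ^ p * ξ₂ y with hA
  set B := ∫ y : Euc N, K₂ y * v₁ y ^ q * ξ₁ y with hB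
  have r1 : A = q * B := by rw [← E2', E1']
  have r2 : p * A = B := by rw [← E3', E4']
  have hqp : 1 < q * p := by nlinarith
  have hA0 : A = 0 := by
    have h1 : A = A * (q * p) := by linear_combination r1 - q * r2
    have h2 : A * (1 - q * p) = 0 := by rw [mul_sub, mul_one]; linarith
    rcases mul_eq_zero.mp h2 with h | h
    · exact h
    · linarith
  have hB0 : B = 0 := by rw [← r2, hA0, mul_zero]
  refine ⟨Int1, Int3, hfA, hfB, ?_⟩
  rw [integral_add Int1 Int3, integral_add hfA hfB, E1', E3', ← hA, ← hB, hA0, hB0]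
  ring

end
end

section
/- Let N ≥ 1 and let α, β > 0 and σ be constants with 0 < σ ≤ min{α, β}. Then there is a constant C > 0, depending only on α, β, σ, such that for all points x_i ≠ x_j in ℝ^N and all y ∈ ℝ^N: (1+|y-x_i|)^{-α} (1+|y-x_j|)^{-β} ≤ (C/|x_i - x_j|^σ) ((1+|y-x_i|)^{-(α+β-σ)} + (1+|y-x_j|)^{-(α+β-σ)}). -/
open MeasureTheory Real Filter
open scoped RealInnerProductSpace ENNReal

noncomputable section

lemma auxcase17 (α β σ a b d : ℝ) (hσ : 0 < σ) (hσb : σ ≤ β)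
    (ha : 0 ≤ a) (hab : a ≤ b) (hd : 0 < d) (hdb : d ≤ 2 * b) :
    (1 + a) ^ (-α) * (1 + b) ^ (-β) ≤ 2 ^ σ / d ^ σ * (1 + a) ^ (-(α + β - σ)) := by
  have h1a : (0:ℝ) < 1 + a := by linarith
  have h1b : (0:ℝ) < 1 + b := by linarith
  have hd2 : d / 2 ≤ 1 + b := by linarith
  have hstep : (1 + b) ^ (-β) ≤ (d / 2) ^ (-σ) * (1 + a) ^ (-(β - σ)) := by
    have : (1 + b) ^ (-β) = (1 + b) ^ (-σ) * (1 + b) ^ (-(β - σ)) := by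
      rw [← Real.rpow_add h1b]; ring_nf
    rw [this]
    apply mul_le_mul
    · exact Real.rpow_le_rpow_of_nonpos (by linarith) hd2 (by linarith)
    · exact Real.rpow_le_rpow_of_nonpos h1a (by linarith) (by linarith)
    · positivity
    · positivity
  calc (1 + a) ^ (-α) * (1 + b) ^ (-β)
      ≤ (1 + a) ^ (-α) * ((d / 2) ^ (-σ) * (1 + a) ^ (-(β - σ))) := by
        apply mul_le_mul_of_nonneg_left hstep (by positivity)
    _ = (d / 2) ^ (-σ) * (1 + a) ^ (-(α + β - σ)) := by
        rw [show -(α + β - σ) = -α + -(β - σ) by ring, Real.rpow_add h1a]; ring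
    _ = 2 ^ σ / d ^ σ * (1 + a) ^ (-(α + β - σ)) := by
        rw [Real.rpow_neg (by positivity), Real.div_rpow hd.le (by norm_num)]
        field_simp

theorem statement17 (α β σ : ℝ) (hα : 0 < α) (hβ : 0 < β)
    (hσ : 0 < σ) (hσm : σ ≤ min α β) :
    ∃ C : ℝ, 0 < C ∧ ∀ (N : ℕ), 1 ≤ N → ∀ xi xj y : Euc N, xi ≠ xj →
      (1 + ‖y - xi‖) ^ (-α) * (1 + ‖y - xj‖) ^ (-β) ≤
        C / ‖xi - xj‖ ^ σ *
          ((1 + ‖y - xi‖) ^ (-(α + β - σ)) + (1 + ‖y - xj‖) ^ (-(α + β - σ))) := by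
  refine ⟨2 ^ σ, by positivity, fun N hN xi xj y hne => ?_⟩
  set a := ‖y - xi‖ with ha
  set b := ‖y - xj‖ with hb
  set d := ‖xi - xj‖ with hd
  have hdpos : 0 < d := norm_sub_pos_iff.mpr hne
  have htri : d ≤ a + b := by
    have : xi - xj = (y - xj) - (y - xi) := by abel
    rw [hd, this]
    exact (norm_sub_le _ _).trans (by rw [add_comm])
  have hA : (0:ℝ) ≤ (1 + a) ^ (-(α + β - σ)) := by positivity
  have hB : (0:ℝ) ≤ (1 + b) ^ (-(α + β - σ)) := by positivity
  have hC : (0:ℝ) ≤ 2 ^ σ / d ^ σ := by positivity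
  rcases le_total a b with hab | hab
  · have := auxcase17 α β σ a b d hσ (hσm.trans (min_le_right _ _)) (norm_nonneg _) hab
      hdpos (by linarith)
    calc (1 + a) ^ (-α) * (1 + b) ^ (-β) ≤ 2 ^ σ / d ^ σ * (1 + a) ^ (-(α + β - σ)) := this
      _ ≤ _ := by nlinarith
  · have := auxcase17 β α σ b a d hσ (hσm.trans (min_le_left _ _)) (norm_nonneg _) hab
      hdpos (by linarith)
    calc (1 + a) ^ (-α) * (1 + b) ^ (-β)
        = (1 + b) ^ (-β) * (1 + a) ^ (-α) := by ring
      _ ≤ 2 ^ σ / d ^ σ * (1 + b) ^ (-(β + α - σ)) := this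
      _ ≤ _ := by rw [show β + α - σ = α + β - σ by ring]; nlinarith

end
end

section
/- Let N ≥ 3 and let σ > 0 with σ ≠ N - 2. Then there exists a constant C > 0, depending only on N and σ, such that for every y ∈ ℝ^N: ∫_{ℝ^N} |y - z|^{-(N-2)} (1+|z|)^{-(2+σ)} dz ≤ C (1+|y|)^{-min{σ, N-2}}, the integral being finite for every y. -/
open MeasureTheory Real Filter
open scoped RealInnerProductSpace ENNReal

noncomputable section

open Metric Set

private lemma meas_rpow_const (α : ℝ) : Measurable fun x : ℝ => x ^ α := by
  have h : (fun x : ℝ => x ^ α) = fun x =>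
      if x = 0 then (if α = 0 then 1 else 0)
      else Real.exp (Real.log x * α) * (if x < 0 then Real.cos (α * π) else 1) := by
    funext x
    rcases lt_trichotomy x 0 with h|h|h
    · rw [Real.rpow_def_of_neg h]
      simp [h.ne, h, mul_comm]
    · subst h
      rcases eq_or_ne α 0 with h'|h'
      · simp [h']
      · simp [Real.zero_rpow h', h']
    · rw [Real.rpow_def_of_pos h]
      simp [h.ne', not_lt.2 h.le]
  rw [h]
  refine Measurable.ite (measurableSet_singleton 0) measurable_const ?_
  exact ((Real.measurable_log.mul measurable_const).exp.mul
    (Measurable.ite measurableSet_Iio measurable_const measurable_const))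

private lemma ofReal_shuffle {V : ℝ≥0∞} {x w c t : ℝ} (hx : 0 ≤ x) (hc : 0 ≤ c)
    (h : x * w ≤ c * t) :
    ENNReal.ofReal x * (V * ENNReal.ofReal w)
      ≤ (V * ENNReal.ofReal c) * ENNReal.ofReal t := by
  calc ENNReal.ofReal x * (V * ENNReal.ofReal w)
      = V * (ENNReal.ofReal x * ENNReal.ofReal w) := by ring
    _ = V * ENNReal.ofReal (x * w) := by rw [ENNReal.ofReal_mul hx]
    _ ≤ V * ENNReal.ofReal (c * t) :=
        mul_le_mul_right (ENNReal.ofReal_le_ofReal h) V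
    _ = V * (ENNReal.ofReal c * ENNReal.ofReal t) := by rw [ENNReal.ofReal_mul hc]
    _ = (V * ENNReal.ofReal c) * ENNReal.ofReal t := (mul_assoc _ _ _).symm

private lemma ofReal_shuffle2 {G : ℝ≥0∞} {x c t : ℝ} (hc : 0 ≤ c) (h : x ≤ c * t) :
    ENNReal.ofReal x * G ≤ (ENNReal.ofReal c * G) * ENNReal.ofReal t := by
  calc ENNReal.ofReal x * G
      ≤ ENNReal.ofReal (c * t) * G :=
        mul_le_mul_left (ENNReal.ofReal_le_ofReal h) G
    _ = (ENNReal.ofReal c * ENNReal.ofReal t) * G := by rw [ENNReal.ofReal_mul hc]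
    _ = (ENNReal.ofReal c * G) * ENNReal.ofReal t := by ring

private lemma lint_ball {N : ℕ} (hN : 0 < N) {α : ℝ} (h0 : 0 < α) (hα : α < (N:ℝ))
    (y : Euc N) {R : ℝ} (hR : 0 < R) :
    ∫⁻ z in ball y R, ENNReal.ofReal (‖y - z‖ ^ (-α))
      ≤ volume (ball (0 : Euc N) 1) *
        ENNReal.ofReal (R ^ ((N:ℝ) - α) * (1 + α / ((N:ℝ) - α))) := by
  haveI : Nonempty (Fin N) := ⟨⟨0, hN⟩⟩
  set V := volume (ball (0 : Euc N) 1) with hVdef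
  have hVtop : V ≠ ⊤ := measure_ball_lt_top.ne
  have hNα : 0 < (N:ℝ) - α := by linarith
  have hvol : ∀ (c : Euc N) {r : ℝ}, 0 ≤ r →
      volume (ball c r) = ENNReal.ofReal (r ^ (N:ℝ)) * V := by
    intro c r hr
    rw [Measure.addHaar_ball _ _ hr, finrank_euclideanSpace_fin, Real.rpow_natCast, hVdef]
  have hf : Measurable fun z : Euc N => ‖y - z‖ ^ (-α) :=
    (meas_rpow_const (-α)).comp (measurable_const.sub measurable_id).norm
  rw [lintegral_eq_lintegral_meas_lt _
      (Eventually.of_forall fun z => Real.rpow_nonneg (norm_nonneg _) _) hf.aemeasurable]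
  set T₀ := R ^ (-α) with hT₀def
  have hT₀ : 0 < T₀ := Real.rpow_pos_of_pos hR _
  have hsub : ∀ t : ℝ, 0 < t →
      {z : Euc N | t < ‖y - z‖ ^ (-α)} ⊆ ball y (t ^ (-α)⁻¹) := by
    intro t ht z hz
    simp only [Set.mem_setOf_eq] at hz
    have hz0 : 0 < ‖y - z‖ := by
      rcases (norm_nonneg (y - z)).eq_or_lt with h | h
      · rw [← h, Real.zero_rpow (by linarith : -α ≠ 0)] at hz; linarith
      · exact h
    have h2 : ‖y - z‖ < t ^ (-α)⁻¹ :=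
      (Real.lt_rpow_inv_iff_of_neg hz0 ht (by linarith : -α < 0)).mpr hz
    rw [mem_ball, dist_eq_norm, ← norm_neg, neg_sub]
    exact h2
  rw [← Ioc_union_Ioi_eq_Ioi hT₀.le,
    lintegral_union measurableSet_Ioi (Ioc_disjoint_Ioi le_rfl)]
  have p1 : (∫⁻ t in Ioc (0:ℝ) T₀,
        (volume.restrict (ball y R)) {z | t < ‖y - z‖ ^ (-α)})
      ≤ V * ENNReal.ofReal (R ^ ((N:ℝ) - α)) := by
    have hb : ∀ t ∈ Ioc (0:ℝ) T₀,
        (volume.restrict (ball y R)) {z | t < ‖y - z‖ ^ (-α)}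
          ≤ ENNReal.ofReal (R ^ (N:ℝ)) * V := by
      intro t _
      calc (volume.restrict (ball y R)) {z | t < ‖y - z‖ ^ (-α)}
          ≤ (volume.restrict (ball y R)) Set.univ := measure_mono (Set.subset_univ _)
        _ = volume (ball y R) := Measure.restrict_apply_univ _
        _ = ENNReal.ofReal (R ^ (N:ℝ)) * V := hvol y hR.le
    calc (∫⁻ t in Ioc (0:ℝ) T₀,
          (volume.restrict (ball y R)) {z | t < ‖y - z‖ ^ (-α)})
        ≤ ∫⁻ _t in Ioc (0:ℝ) T₀, ENNReal.ofReal (R ^ (N:ℝ)) * V :=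
          setLIntegral_mono' measurableSet_Ioc hb
      _ = ENNReal.ofReal (R ^ (N:ℝ)) * V * ENNReal.ofReal T₀ := by
          rw [setLIntegral_const, Real.volume_Ioc, sub_zero]
      _ = V * ENNReal.ofReal (R ^ ((N:ℝ) - α)) := by
          rw [sub_eq_add_neg, Real.rpow_add hR, ← hT₀def,
            ENNReal.ofReal_mul (by positivity)]
          ring
  have p2 : (∫⁻ t in Ioi T₀,
        (volume.restrict (ball y R)) {z | t < ‖y - z‖ ^ (-α)})
      ≤ V * ENNReal.ofReal (R ^ ((N:ℝ) - α) * (α / ((N:ℝ) - α))) := by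
    set γ : ℝ := (-α)⁻¹ * N with hγdef
    have hγ : γ < -1 := by
      have h1 : 1 < α⁻¹ * N := by
        rw [inv_mul_eq_div, lt_div_iff₀ h0]
        linarith
      rw [hγdef, inv_neg]
      linarith
    have hb : ∀ t ∈ Ioi T₀,
        (volume.restrict (ball y R)) {z | t < ‖y - z‖ ^ (-α)}
          ≤ ENNReal.ofReal (t ^ γ) * V := by
      intro t ht
      have ht0 : 0 < t := hT₀.trans ht
      calc (volume.restrict (ball y R)) {z | t < ‖y - z‖ ^ (-α)}
          ≤ volume {z : Euc N | t < ‖y - z‖ ^ (-α)} :=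
            Measure.restrict_le_self _
        _ ≤ volume (ball y (t ^ (-α)⁻¹)) := measure_mono (hsub t ht0)
        _ = ENNReal.ofReal ((t ^ (-α)⁻¹) ^ (N:ℝ)) * V :=
            hvol y (Real.rpow_nonneg ht0.le _)
        _ = ENNReal.ofReal (t ^ γ) * V := by rw [hγdef, Real.rpow_mul ht0.le]
    calc (∫⁻ t in Ioi T₀,
          (volume.restrict (ball y R)) {z | t < ‖y - z‖ ^ (-α)})
        ≤ ∫⁻ t in Ioi T₀, ENNReal.ofReal (t ^ γ) * V :=
          setLIntegral_mono' measurableSet_Ioi hb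
      _ = (∫⁻ t in Ioi T₀, ENNReal.ofReal (t ^ γ)) * V :=
          lintegral_mul_const' V _ hVtop
      _ = ENNReal.ofReal (∫ t in Ioi T₀, t ^ γ) * V := by
          rw [ofReal_integral_eq_lintegral_ofReal (integrableOn_Ioi_rpow_of_lt hγ hT₀)
            ((ae_restrict_mem measurableSet_Ioi).mono fun t ht =>
              Real.rpow_nonneg (hT₀.trans ht).le _)]
      _ ≤ V * ENNReal.ofReal (R ^ ((N:ℝ) - α) * (α / ((N:ℝ) - α))) := by
          rw [integral_Ioi_rpow_of_lt hγ hT₀]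
          have h1 : T₀ ^ (γ + 1) = R ^ ((N:ℝ) - α) := by
            rw [hT₀def, ← Real.rpow_mul hR.le]
            congr 1
            have hc : -α * (-α)⁻¹ = 1 := mul_inv_cancel₀ (by linarith : -α ≠ 0)
            rw [hγdef]
            linear_combination (N:ℝ) * hc
          have h2 : -(R ^ ((N:ℝ) - α)) / (γ + 1)
              = R ^ ((N:ℝ) - α) * (α / ((N:ℝ) - α)) := by
            have hγ1 : γ + 1 = (α - (N:ℝ)) / α := by
              rw [hγdef, inv_neg]
              field_simp
              ring
            rw [hγ1]
            have hne : α - (N:ℝ) ≠ 0 := by intro h; rw [sub_eq_zero] at h; linarith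
            field_simp
            ring
          rw [h1, h2]
          exact le_of_eq (mul_comm _ _)
  refine le_trans (add_le_add p1 p2) (le_of_eq ?_)
  rw [← mul_add, ← ENNReal.ofReal_add (by positivity)
    (mul_nonneg (by positivity) (div_nonneg h0.le hNα.le))]
  congr 1
  ring

private lemma lint_compl {N : ℕ} (hN : 0 < N) {β : ℝ} (hβ : (N:ℝ) < β)
    {R : ℝ} (hR : 0 < R) :
    ∫⁻ z in (ball (0 : Euc N) R)ᶜ, ENNReal.ofReal (‖z‖ ^ (-β))
      ≤ volume (ball (0 : Euc N) 1) *
        ENNReal.ofReal (R ^ ((N:ℝ) - β) * (β / (β - (N:ℝ)))) := by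
  haveI : Nonempty (Fin N) := ⟨⟨0, hN⟩⟩
  set V := volume (ball (0 : Euc N) 1) with hVdef
  have hVtop : V ≠ ⊤ := measure_ball_lt_top.ne
  have hN0 : (0:ℝ) < N := by exact_mod_cast hN
  have hβ0 : 0 < β := lt_trans hN0 hβ
  have hvol : ∀ (c : Euc N) {r : ℝ}, 0 ≤ r →
      volume (ball c r) = ENNReal.ofReal (r ^ (N:ℝ)) * V := by
    intro c r hr
    rw [Measure.addHaar_ball _ _ hr, finrank_euclideanSpace_fin, Real.rpow_natCast, hVdef]
  have hf : Measurable fun z : Euc N => ‖z‖ ^ (-β) :=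
    (meas_rpow_const (-β)).comp measurable_norm
  rw [lintegral_eq_lintegral_meas_lt _
      (Eventually.of_forall fun z => Real.rpow_nonneg (norm_nonneg _) _) hf.aemeasurable]
  set T₀ := R ^ (-β) with hT₀def
  have hT₀ : 0 < T₀ := Real.rpow_pos_of_pos hR _
  set γ : ℝ := (-β)⁻¹ * N with hγdef
  have hγ1 : -1 < γ := by
    have h1 : β⁻¹ * N < 1 := by
      rw [inv_mul_eq_div, div_lt_one hβ0]
      exact hβ
    rw [hγdef, inv_neg]
    nlinarith [h1]
  have hγne : γ + 1 ≠ 0 := by linarith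
  have hsub : ∀ t : ℝ, 0 < t →
      {z : Euc N | t < ‖z‖ ^ (-β)} ⊆ ball (0 : Euc N) (t ^ (-β)⁻¹) := by
    intro t ht z hz
    simp only [Set.mem_setOf_eq] at hz
    have hz0 : 0 < ‖z‖ := by
      rcases (norm_nonneg z).eq_or_lt with h | h
      · rw [← h, Real.zero_rpow (by linarith : -β ≠ 0)] at hz; linarith
      · exact h
    have h2 : ‖z‖ < t ^ (-β)⁻¹ :=
      (Real.lt_rpow_inv_iff_of_neg hz0 ht (by linarith : -β < 0)).mpr hz
    rw [mem_ball, dist_zero_right]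
    exact h2
  rw [← Ioc_union_Ioi_eq_Ioi hT₀.le,
    lintegral_union measurableSet_Ioi (Ioc_disjoint_Ioi le_rfl)]
  have p2 : (∫⁻ t in Ioi T₀,
        (volume.restrict (ball (0 : Euc N) R)ᶜ) {z | t < ‖z‖ ^ (-β)}) ≤ 0 := by
    have hb : ∀ t ∈ Ioi T₀,
        (volume.restrict (ball (0 : Euc N) R)ᶜ) {z | t < ‖z‖ ^ (-β)} ≤ 0 := by
      intro t ht
      have ht0 : 0 < t := hT₀.trans ht
      rw [Measure.restrict_apply' measurableSet_ball.compl]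
      refine le_of_eq (measure_mono_null ?_ measure_empty)
      intro z hz
      exfalso
      have h2 : ‖z‖ < t ^ (-β)⁻¹ := by
        have := hsub t ht0 hz.1
        rwa [mem_ball, dist_zero_right] at this
      have h3 : t ^ (-β)⁻¹ < T₀ ^ (-β)⁻¹ :=
        Real.rpow_lt_rpow_of_neg hT₀ ht
          (by rw [inv_lt_zero']; linarith)
      have h4 : T₀ ^ (-β)⁻¹ = R := by
        rw [hT₀def, ← Real.rpow_mul hR.le,
          mul_inv_cancel₀ (by linarith : -β ≠ 0), Real.rpow_one]
      have h5 : R ≤ ‖z‖ := by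
        have := hz.2
        simp only [Set.mem_compl_iff, mem_ball, dist_zero_right, not_lt] at this
        exact this
      rw [h4] at h3
      linarith
    calc (∫⁻ t in Ioi T₀,
          (volume.restrict (ball (0 : Euc N) R)ᶜ) {z | t < ‖z‖ ^ (-β)})
        ≤ ∫⁻ _t in Ioi T₀, 0 := setLIntegral_mono' measurableSet_Ioi hb
      _ = 0 := lintegral_zero
  have p1 : (∫⁻ t in Ioc (0:ℝ) T₀,
        (volume.restrict (ball (0 : Euc N) R)ᶜ) {z | t < ‖z‖ ^ (-β)})
      ≤ V * ENNReal.ofReal (R ^ ((N:ℝ) - β) * (β / (β - (N:ℝ)))) := by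
    have hb : ∀ t ∈ Ioc (0:ℝ) T₀,
        (volume.restrict (ball (0 : Euc N) R)ᶜ) {z | t < ‖z‖ ^ (-β)}
          ≤ ENNReal.ofReal (t ^ γ) * V := by
      intro t ht
      have ht0 : 0 < t := ht.1
      calc (volume.restrict (ball (0 : Euc N) R)ᶜ) {z | t < ‖z‖ ^ (-β)}
          ≤ volume {z : Euc N | t < ‖z‖ ^ (-β)} := Measure.restrict_le_self _
        _ ≤ volume (ball (0 : Euc N) (t ^ (-β)⁻¹)) := measure_mono (hsub t ht0)
        _ = ENNReal.ofReal ((t ^ (-β)⁻¹) ^ (N:ℝ)) * V :=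
            hvol _ (Real.rpow_nonneg ht0.le _)
        _ = ENNReal.ofReal (t ^ γ) * V := by rw [hγdef, Real.rpow_mul ht0.le]
    have hInt : IntegrableOn (fun t : ℝ => t ^ γ) (Ioc (0:ℝ) T₀) := by
      rw [← intervalIntegrable_iff_integrableOn_Ioc_of_le hT₀.le]
      exact intervalIntegral.intervalIntegrable_rpow' hγ1
    calc (∫⁻ t in Ioc (0:ℝ) T₀,
          (volume.restrict (ball (0 : Euc N) R)ᶜ) {z | t < ‖z‖ ^ (-β)})
        ≤ ∫⁻ t in Ioc (0:ℝ) T₀, ENNReal.ofReal (t ^ γ) * V :=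
          setLIntegral_mono' measurableSet_Ioc hb
      _ = (∫⁻ t in Ioc (0:ℝ) T₀, ENNReal.ofReal (t ^ γ)) * V :=
          lintegral_mul_const' V _ hVtop
      _ = ENNReal.ofReal (∫ t in Ioc (0:ℝ) T₀, t ^ γ) * V := by
          rw [ofReal_integral_eq_lintegral_ofReal hInt
            ((ae_restrict_mem measurableSet_Ioc).mono fun t ht =>
              Real.rpow_nonneg ht.1.le _)]
      _ ≤ V * ENNReal.ofReal (R ^ ((N:ℝ) - β) * (β / (β - (N:ℝ)))) := by
          rw [← intervalIntegral.integral_of_le hT₀.le,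
            integral_rpow (Or.inl hγ1),
            Real.zero_rpow hγne, sub_zero]
          have h1 : T₀ ^ (γ + 1) = R ^ ((N:ℝ) - β) := by
            rw [hT₀def, ← Real.rpow_mul hR.le]
            congr 1
            have hc : -β * (-β)⁻¹ = 1 := mul_inv_cancel₀ (by linarith : -β ≠ 0)
            rw [hγdef]
            linear_combination (N:ℝ) * hc
          have hγeq : γ + 1 = (β - (N:ℝ)) / β := by
            rw [hγdef, inv_neg]
            field_simp
            ring
          rw [h1, hγeq, div_div_eq_mul_div, mul_div_assoc]
          exact le_of_eq (mul_comm _ _)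
  calc _ ≤ V * ENNReal.ofReal (R ^ ((N:ℝ) - β) * (β / (β - (N:ℝ)))) + 0 :=
        add_le_add p1 p2
    _ = _ := add_zero _

set_option maxHeartbeats 2000000

theorem statement18 (N : ℕ) (hN : 3 ≤ N) (σ : ℝ) (hσ : 0 < σ)
    (hσ' : σ ≠ (N : ℝ) - 2) :
    ∃ C : ℝ, 0 < C ∧ ∀ y : Euc N,
      Integrable (fun z : Euc N => ‖y - z‖ ^ (-((N : ℝ) - 2)) * (1 + ‖z‖) ^ (-(2 + σ))) volume ∧
      ∫ z : Euc N, ‖y - z‖ ^ (-((N : ℝ) - 2)) * (1 + ‖z‖) ^ (-(2 + σ))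
        ≤ C * (1 + ‖y‖) ^ (-(min σ ((N : ℝ) - 2))) := by
  have hN0 : 0 < N := by omega
  have hN3 : (3:ℝ) ≤ (N:ℝ) := by exact_mod_cast hN
  haveI : Nonempty (Fin N) := ⟨⟨0, hN0⟩⟩
  haveI : Nontrivial (Euc N) := inferInstance
  set m := min σ ((N:ℝ) - 2) with hmdef
  have hm1 : m ≤ σ := min_le_left _ _
  have hm2 : m ≤ (N:ℝ) - 2 := min_le_right _ _
  set V := volume (ball (0 : Euc N) 1) with hVdef
  have hVtop : V ≠ ⊤ := measure_ball_lt_top.ne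
  have hα1 : (0:ℝ) < (N:ℝ) - 2 := by linarith
  have hα1N : (N:ℝ) - 2 < (N:ℝ) := by linarith
  have h2σ : (0:ℝ) < 2 + σ := by linarith
  have hFm : ∀ y : Euc N, Measurable fun z : Euc N =>
      ‖y - z‖ ^ (-((N:ℝ) - 2)) * (1 + ‖z‖) ^ (-(2 + σ)) := fun y =>
    ((meas_rpow_const _).comp (measurable_const.sub measurable_id).norm).mul
      ((meas_rpow_const _).comp (measurable_norm.const_add 1))
  have hFnn : ∀ y z : Euc N,
      0 ≤ ‖y - z‖ ^ (-((N:ℝ) - 2)) * (1 + ‖z‖) ^ (-(2 + σ)) := fun y z =>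
    mul_nonneg (Real.rpow_nonneg (norm_nonneg _) _) (Real.rpow_nonneg (by positivity) _)
  obtain ⟨K, hKtop, hK⟩ : ∃ K : ℝ≥0∞, K ≠ ⊤ ∧ ∀ y : Euc N,
      (∫⁻ z : Euc N, ENNReal.ofReal
        (‖y - z‖ ^ (-((N:ℝ) - 2)) * (1 + ‖z‖) ^ (-(2 + σ))))
        ≤ K * ENNReal.ofReal ((1 + ‖y‖) ^ (-m)) := by
    have h0ae : ∀ᵐ z : Euc N ∂volume, z ≠ (0 : Euc N) := by
      rw [ae_iff]
      simp only [not_not, Set.setOf_eq_eq_singleton]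
      exact measure_singleton _
    -- Term A : the ball around y
    have HA : ∃ KA : ℝ≥0∞, KA ≠ ⊤ ∧ ∀ y : Euc N,
        ∫⁻ z in ball y ((1 + ‖y‖)/2), ENNReal.ofReal
          (‖y - z‖ ^ (-((N:ℝ) - 2)) * (1 + ‖z‖) ^ (-(2 + σ)))
          ≤ KA * ENNReal.ofReal ((1 + ‖y‖) ^ (-m)) := by
      set c₁ : ℝ := 1 + ((N:ℝ) - 2) / ((N:ℝ) - ((N:ℝ) - 2)) with hc₁def
      have hc₁0 : 0 ≤ c₁ := by
        have h2 : (N:ℝ) - ((N:ℝ) - 2) = 2 := by ring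
        rw [hc₁def, h2]
        positivity
      have h2σnn : (0:ℝ) ≤ 2 ^ σ := Real.rpow_nonneg (by norm_num) _
      refine ⟨V * ENNReal.ofReal (2 ^ σ * c₁),
        ENNReal.mul_ne_top hVtop ENNReal.ofReal_ne_top, fun y => ?_⟩
      set a := 1 + ‖y‖ with hadef
      have ha1 : 1 ≤ a := by
        rw [hadef]; nlinarith [norm_nonneg y]
      have ha0 : 0 < a := by linarith
      have hhalf : 0 < a / 2 := by linarith
      have key : ∀ z ∈ ball y (a/2),
          ‖y - z‖ ^ (-((N:ℝ) - 2)) * (1 + ‖z‖) ^ (-(2 + σ))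
            ≤ (a/2) ^ (-(2 + σ)) * ‖y - z‖ ^ (-((N:ℝ) - 2)) := by
        intro z hz
        rw [mem_ball, dist_eq_norm, norm_sub_rev] at hz
        have hz2 : a/2 ≤ 1 + ‖z‖ := by
          have h := norm_sub_norm_le y z
          have ha' : a = 1 + ‖y‖ := hadef
          linarith
        have hw : (1 + ‖z‖) ^ (-(2 + σ)) ≤ (a/2) ^ (-(2 + σ)) :=
          Real.rpow_le_rpow_of_nonpos hhalf hz2 (by linarith)
        calc ‖y - z‖ ^ (-((N:ℝ) - 2)) * (1 + ‖z‖) ^ (-(2 + σ))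
            ≤ ‖y - z‖ ^ (-((N:ℝ) - 2)) * ((a/2) ^ (-(2 + σ))) :=
              mul_le_mul_of_nonneg_left hw (Real.rpow_nonneg (norm_nonneg _) _)
          _ = (a/2) ^ (-(2 + σ)) * ‖y - z‖ ^ (-((N:ℝ) - 2)) := mul_comm _ _
      calc ∫⁻ z in ball y (a/2), ENNReal.ofReal
            (‖y - z‖ ^ (-((N:ℝ) - 2)) * (1 + ‖z‖) ^ (-(2 + σ)))
          ≤ ∫⁻ z in ball y (a/2), ENNReal.ofReal ((a/2) ^ (-(2 + σ))) *
              ENNReal.ofReal (‖y - z‖ ^ (-((N:ℝ) - 2))) := by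
            refine setLIntegral_mono' measurableSet_ball fun z hz => ?_
            rw [← ENNReal.ofReal_mul (Real.rpow_nonneg hhalf.le _)]
            exact ENNReal.ofReal_le_ofReal (key z hz)
        _ = ENNReal.ofReal ((a/2) ^ (-(2 + σ))) *
              ∫⁻ z in ball y (a/2), ENNReal.ofReal (‖y - z‖ ^ (-((N:ℝ) - 2))) :=
            lintegral_const_mul' _ _ ENNReal.ofReal_ne_top
        _ ≤ ENNReal.ofReal ((a/2) ^ (-(2 + σ))) *
              (V * ENNReal.ofReal ((a/2) ^ ((N:ℝ) - ((N:ℝ) - 2)) * c₁)) :=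
            mul_le_mul_right (lint_ball hN0 hα1 hα1N y hhalf) _
        _ ≤ (V * ENNReal.ofReal (2 ^ σ * c₁)) * ENNReal.ofReal (a ^ (-m)) := by
            have e1 : (N:ℝ) - ((N:ℝ) - 2) = (2:ℝ) := by ring
            have e2 : (a/2) ^ (-(2 + σ)) * (a/2) ^ (2:ℝ) = (a/2) ^ (-σ) := by
              rw [← Real.rpow_add hhalf]
              congr 1
              ring
            have e3 : (a/2) ^ (-σ) = 2 ^ σ * a ^ (-σ) := by
              rw [Real.div_rpow ha0.le (by norm_num : (0:ℝ) ≤ 2),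
                Real.rpow_neg (by norm_num : (0:ℝ) ≤ 2), div_eq_mul_inv, inv_inv, mul_comm]
            have e4 : a ^ (-σ) ≤ a ^ (-m) :=
              Real.rpow_le_rpow_of_exponent_le ha1 (by linarith)
            have key2 : (a/2) ^ (-(2 + σ)) * ((a/2) ^ ((N:ℝ) - ((N:ℝ) - 2)) * c₁)
                ≤ (2 ^ σ * c₁) * a ^ (-m) := by
              calc (a/2) ^ (-(2 + σ)) * ((a/2) ^ ((N:ℝ) - ((N:ℝ) - 2)) * c₁)
                  = ((a/2) ^ (-(2 + σ)) * (a/2) ^ (2:ℝ)) * c₁ := by rw [e1]; ring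
                _ = (2 ^ σ * a ^ (-σ)) * c₁ := by rw [e2, e3]
                _ ≤ (2 ^ σ * a ^ (-m)) * c₁ :=
                    mul_le_mul_of_nonneg_right
                      (mul_le_mul_of_nonneg_left e4 h2σnn) hc₁0
                _ = (2 ^ σ * c₁) * a ^ (-m) := by ring
            exact ofReal_shuffle (Real.rpow_nonneg hhalf.le _)
              (mul_nonneg h2σnn hc₁0) key2
    -- Term C : outside the big ball
    have HC : ∃ KC : ℝ≥0∞, KC ≠ ⊤ ∧ ∀ y : Euc N,
        ∫⁻ z in (ball (0 : Euc N) (2 * (1 + ‖y‖)))ᶜ, ENNReal.ofReal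
          (‖y - z‖ ^ (-((N:ℝ) - 2)) * (1 + ‖z‖) ^ (-(2 + σ)))
          ≤ KC * ENNReal.ofReal ((1 + ‖y‖) ^ (-m)) := by
      set c₃ : ℝ := ((N:ℝ) + σ) / (((N:ℝ) + σ) - (N:ℝ)) with hc₃def
      have hc₃0 : 0 ≤ c₃ := div_nonneg (by linarith) (by linarith)
      have h2nn : (0:ℝ) ≤ 2 ^ ((N:ℝ) - 2) := Real.rpow_nonneg (by norm_num) _
      refine ⟨V * ENNReal.ofReal (2 ^ ((N:ℝ) - 2) * c₃),
        ENNReal.mul_ne_top hVtop ENNReal.ofReal_ne_top, fun y => ?_⟩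
      set a := 1 + ‖y‖ with hadef
      have ha1 : 1 ≤ a := by
        rw [hadef]; nlinarith [norm_nonneg y]
      have ha0 : 0 < a := by linarith
      have h2a : 0 < 2 * a := by linarith
      have key : ∀ z ∈ (ball (0 : Euc N) (2 * a))ᶜ,
          ‖y - z‖ ^ (-((N:ℝ) - 2)) * (1 + ‖z‖) ^ (-(2 + σ))
            ≤ 2 ^ ((N:ℝ) - 2) * ‖z‖ ^ (-((N:ℝ) + σ)) := by
        intro z hz
        have hz2a : 2 * a ≤ ‖z‖ := by
          simp only [Set.mem_compl_iff, mem_ball, dist_zero_right, not_lt] at hz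
          exact hz
        have hz0 : 0 < ‖z‖ := lt_of_lt_of_le (by linarith) hz2a
        have hzy : ‖z‖ / 2 ≤ ‖y - z‖ := by
          have t1 : ‖z‖ - ‖y‖ ≤ ‖y - z‖ := by
            rw [norm_sub_rev]
            exact norm_sub_norm_le z y
          have t2 : ‖y‖ ≤ a := by rw [hadef]; linarith [norm_nonneg y]
          linarith
        have b1 : ‖y - z‖ ^ (-((N:ℝ) - 2)) ≤ (‖z‖ / 2) ^ (-((N:ℝ) - 2)) :=
          Real.rpow_le_rpow_of_nonpos (by linarith) hzy (by linarith)
        have b2 : (1 + ‖z‖) ^ (-(2 + σ)) ≤ ‖z‖ ^ (-(2 + σ)) :=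
          Real.rpow_le_rpow_of_nonpos hz0 (by linarith) (by linarith)
        have e1 : (‖z‖ / 2) ^ (-((N:ℝ) - 2)) = 2 ^ ((N:ℝ) - 2) * ‖z‖ ^ (-((N:ℝ) - 2)) := by
          rw [Real.div_rpow hz0.le (by norm_num : (0:ℝ) ≤ 2),
            Real.rpow_neg (by norm_num : (0:ℝ) ≤ 2), div_eq_mul_inv, inv_inv, mul_comm]
        have e3 : ‖z‖ ^ (-((N:ℝ) - 2)) * ‖z‖ ^ (-(2 + σ)) = ‖z‖ ^ (-((N:ℝ) + σ)) := by
          rw [← Real.rpow_add hz0]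
          congr 1
          ring
        calc ‖y - z‖ ^ (-((N:ℝ) - 2)) * (1 + ‖z‖) ^ (-(2 + σ))
            ≤ (‖z‖ / 2) ^ (-((N:ℝ) - 2)) * ‖z‖ ^ (-(2 + σ)) :=
              mul_le_mul b1 b2 (Real.rpow_nonneg (by positivity) _)
                (Real.rpow_nonneg (by positivity) _)
          _ = 2 ^ ((N:ℝ) - 2) * (‖z‖ ^ (-((N:ℝ) - 2)) * ‖z‖ ^ (-(2 + σ))) := by
              rw [e1]; ring
          _ = 2 ^ ((N:ℝ) - 2) * ‖z‖ ^ (-((N:ℝ) + σ)) := by rw [e3]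
      calc ∫⁻ z in (ball (0 : Euc N) (2 * a))ᶜ, ENNReal.ofReal
            (‖y - z‖ ^ (-((N:ℝ) - 2)) * (1 + ‖z‖) ^ (-(2 + σ)))
          ≤ ∫⁻ z in (ball (0 : Euc N) (2 * a))ᶜ, ENNReal.ofReal (2 ^ ((N:ℝ) - 2)) *
              ENNReal.ofReal (‖z‖ ^ (-((N:ℝ) + σ))) := by
            refine setLIntegral_mono' measurableSet_ball.compl fun z hz => ?_
            rw [← ENNReal.ofReal_mul h2nn]
            exact ENNReal.ofReal_le_ofReal (key z hz)
        _ = ENNReal.ofReal (2 ^ ((N:ℝ) - 2)) *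
              ∫⁻ z in (ball (0 : Euc N) (2 * a))ᶜ, ENNReal.ofReal (‖z‖ ^ (-((N:ℝ) + σ))) :=
            lintegral_const_mul' _ _ ENNReal.ofReal_ne_top
        _ ≤ ENNReal.ofReal (2 ^ ((N:ℝ) - 2)) *
              (V * ENNReal.ofReal ((2*a) ^ ((N:ℝ) - ((N:ℝ) + σ)) * c₃)) :=
            mul_le_mul_right (lint_compl hN0 (by linarith : (N:ℝ) < (N:ℝ) + σ) h2a) _
        _ ≤ (V * ENNReal.ofReal (2 ^ ((N:ℝ) - 2) * c₃)) *
              ENNReal.ofReal (a ^ (-m)) := by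
            have keyC : (2*a) ^ ((N:ℝ) - ((N:ℝ) + σ)) * c₃ ≤ c₃ * a ^ (-m) := by
              have eexp : (N:ℝ) - ((N:ℝ) + σ) = -σ := by ring
              have e2 : (2*a) ^ (-σ) = 2 ^ (-σ) * a ^ (-σ) :=
                Real.mul_rpow (by norm_num) ha0.le
              have h21 : (2:ℝ) ^ (-σ) ≤ 1 :=
                Real.rpow_le_one_of_one_le_of_nonpos (by norm_num) (by linarith)
              have e4 : a ^ (-σ) ≤ a ^ (-m) :=
                Real.rpow_le_rpow_of_exponent_le ha1 (by linarith)
              have h5 : (2*a) ^ (-σ) ≤ a ^ (-m) := by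
                rw [e2]
                calc (2:ℝ) ^ (-σ) * a ^ (-σ) ≤ 1 * a ^ (-σ) :=
                      mul_le_mul_of_nonneg_right h21 (Real.rpow_nonneg ha0.le _)
                  _ = a ^ (-σ) := one_mul _
                  _ ≤ a ^ (-m) := e4
              rw [eexp]
              calc (2*a) ^ (-σ) * c₃ ≤ a ^ (-m) * c₃ :=
                    mul_le_mul_of_nonneg_right h5 hc₃0
                _ = c₃ * a ^ (-m) := mul_comm _ _
            refine ofReal_shuffle h2nn (mul_nonneg h2nn hc₃0) ?_
            calc 2 ^ ((N:ℝ) - 2) * ((2*a) ^ ((N:ℝ) - ((N:ℝ) + σ)) * c₃)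
                ≤ 2 ^ ((N:ℝ) - 2) * (c₃ * a ^ (-m)) :=
                  mul_le_mul_of_nonneg_left keyC h2nn
              _ = (2 ^ ((N:ℝ) - 2) * c₃) * a ^ (-m) := by ring
    -- Term B : intermediate region
    have HB : ∃ KB : ℝ≥0∞, KB ≠ ⊤ ∧ ∀ y : Euc N,
        ∫⁻ z in (ball y ((1 + ‖y‖)/2))ᶜ ∩ ball (0 : Euc N) (2 * (1 + ‖y‖)),
          ENNReal.ofReal
            (‖y - z‖ ^ (-((N:ℝ) - 2)) * (1 + ‖z‖) ^ (-(2 + σ)))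
          ≤ KB * ENNReal.ofReal ((1 + ‖y‖) ^ (-m)) := by
      have h2nn : (0:ℝ) ≤ 2 ^ ((N:ℝ) - 2) := Real.rpow_nonneg (by norm_num) _
      rcases lt_or_gt_of_ne hσ' with hcase | hcase
      · -- σ < N - 2
        set c₂ : ℝ := 1 + (2 + σ) / ((N:ℝ) - (2 + σ)) with hc₂def
        have hNσ : 0 < (N:ℝ) - (2 + σ) := by linarith
        have hc₂0 : 0 ≤ c₂ := by
          have := div_nonneg h2σ.le hNσ.le
          rw [hc₂def]
          linarith
        have h2nn' : (0:ℝ) ≤ 2 ^ (((N:ℝ) - 2) - σ) := Real.rpow_nonneg (by norm_num) _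
        refine ⟨V * ENNReal.ofReal (2 ^ ((N:ℝ) - 2) * 2 ^ (((N:ℝ) - 2) - σ) * c₂),
          ENNReal.mul_ne_top hVtop ENNReal.ofReal_ne_top, fun y => ?_⟩
        set a := 1 + ‖y‖ with hadef
        have ha1 : 1 ≤ a := by
          rw [hadef]; nlinarith [norm_nonneg y]
        have ha0 : 0 < a := by linarith
        have hhalf : 0 < a / 2 := by linarith
        have h2a : 0 < 2 * a := by linarith
        set s := (ball y (a/2))ᶜ ∩ ball (0 : Euc N) (2 * a) with hsdef
        have hs : MeasurableSet s := measurableSet_ball.compl.inter measurableSet_ball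
        have hae : ∀ᵐ z ∂(volume.restrict s),
            ENNReal.ofReal (‖y - z‖ ^ (-((N:ℝ) - 2)) * (1 + ‖z‖) ^ (-(2 + σ)))
              ≤ ENNReal.ofReal ((a/2) ^ (-((N:ℝ) - 2))) *
                  ENNReal.ofReal (‖z‖ ^ (-(2 + σ))) := by
          filter_upwards [ae_restrict_mem hs, ae_restrict_of_ae h0ae] with z hzs hz0
          rw [← ENNReal.ofReal_mul (Real.rpow_nonneg hhalf.le _)]
          refine ENNReal.ofReal_le_ofReal ?_
          have hz1 : a/2 ≤ ‖y - z‖ := by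
            have := hzs.1
            simp only [Set.mem_compl_iff, mem_ball, dist_eq_norm, not_lt] at this
            rw [norm_sub_rev] at this
            exact this
          have hz0' : 0 < ‖z‖ := norm_pos_iff.mpr hz0
          have b1 : ‖y - z‖ ^ (-((N:ℝ) - 2)) ≤ (a/2) ^ (-((N:ℝ) - 2)) :=
            Real.rpow_le_rpow_of_nonpos hhalf hz1 (by linarith)
          have b2 : (1 + ‖z‖) ^ (-(2 + σ)) ≤ ‖z‖ ^ (-(2 + σ)) :=
            Real.rpow_le_rpow_of_nonpos hz0' (by linarith) (by linarith)
          exact mul_le_mul b1 b2 (Real.rpow_nonneg (by positivity) _)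
            (Real.rpow_nonneg hhalf.le _)
        have hlil := lint_ball hN0 h2σ (by linarith : 2 + σ < (N:ℝ)) (0 : Euc N) h2a
        simp only [zero_sub, norm_neg] at hlil
        calc ∫⁻ z in s, ENNReal.ofReal
              (‖y - z‖ ^ (-((N:ℝ) - 2)) * (1 + ‖z‖) ^ (-(2 + σ)))
            ≤ ∫⁻ z in s, ENNReal.ofReal ((a/2) ^ (-((N:ℝ) - 2))) *
                ENNReal.ofReal (‖z‖ ^ (-(2 + σ))) := lintegral_mono_ae hae
          _ = ENNReal.ofReal ((a/2) ^ (-((N:ℝ) - 2))) *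
                ∫⁻ z in s, ENNReal.ofReal (‖z‖ ^ (-(2 + σ))) :=
              lintegral_const_mul' _ _ ENNReal.ofReal_ne_top
          _ ≤ ENNReal.ofReal ((a/2) ^ (-((N:ℝ) - 2))) *
                ∫⁻ z in ball (0 : Euc N) (2 * a), ENNReal.ofReal (‖z‖ ^ (-(2 + σ))) :=
              mul_le_mul_right (lintegral_mono_set Set.inter_subset_right) _
          _ ≤ ENNReal.ofReal ((a/2) ^ (-((N:ℝ) - 2))) *
                (V * ENNReal.ofReal ((2*a) ^ ((N:ℝ) - (2 + σ)) * c₂)) :=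
              mul_le_mul_right hlil _
          _ ≤ (V * ENNReal.ofReal (2 ^ ((N:ℝ) - 2) * 2 ^ (((N:ℝ) - 2) - σ) * c₂)) *
                ENNReal.ofReal (a ^ (-m)) := by
              have e1 : (a/2) ^ (-((N:ℝ) - 2)) = 2 ^ ((N:ℝ) - 2) * a ^ (-((N:ℝ) - 2)) := by
                rw [Real.div_rpow ha0.le (by norm_num : (0:ℝ) ≤ 2),
                  Real.rpow_neg (by norm_num : (0:ℝ) ≤ 2), div_eq_mul_inv, inv_inv, mul_comm]
              have e2 : (2*a) ^ ((N:ℝ) - (2 + σ))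
                  = 2 ^ ((N:ℝ) - (2 + σ)) * a ^ ((N:ℝ) - (2 + σ)) :=
                Real.mul_rpow (by norm_num) ha0.le
              have e3 : a ^ (-((N:ℝ) - 2)) * a ^ ((N:ℝ) - (2 + σ)) = a ^ (-σ) := by
                rw [← Real.rpow_add ha0]
                congr 1
                ring
              have e5 : (2:ℝ) ^ ((N:ℝ) - (2 + σ)) = 2 ^ (((N:ℝ) - 2) - σ) := by
                congr 1
                ring
              have e4 : a ^ (-σ) ≤ a ^ (-m) :=
                Real.rpow_le_rpow_of_exponent_le ha1 (by linarith)
              have key2 : (a/2) ^ (-((N:ℝ) - 2)) * ((2*a) ^ ((N:ℝ) - (2 + σ)) * c₂)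
                  ≤ (2 ^ ((N:ℝ) - 2) * 2 ^ (((N:ℝ) - 2) - σ) * c₂) * a ^ (-m) := by
                rw [e1, e2, e5]
                calc (2 ^ ((N:ℝ) - 2) * a ^ (-((N:ℝ) - 2))) *
                      ((2 ^ (((N:ℝ) - 2) - σ) * a ^ ((N:ℝ) - (2 + σ))) * c₂)
                    = (2 ^ ((N:ℝ) - 2) * 2 ^ (((N:ℝ) - 2) - σ) * c₂) *
                        (a ^ (-((N:ℝ) - 2)) * a ^ ((N:ℝ) - (2 + σ))) := by ring
                  _ = (2 ^ ((N:ℝ) - 2) * 2 ^ (((N:ℝ) - 2) - σ) * c₂) * a ^ (-σ) := by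
                      rw [e3]
                  _ ≤ (2 ^ ((N:ℝ) - 2) * 2 ^ (((N:ℝ) - 2) - σ) * c₂) * a ^ (-m) :=
                      mul_le_mul_of_nonneg_left e4
                        (mul_nonneg (mul_nonneg h2nn h2nn') hc₂0)
              exact ofReal_shuffle (Real.rpow_nonneg hhalf.le _)
                (mul_nonneg (mul_nonneg h2nn h2nn') hc₂0) key2
      · -- σ > N - 2
        have hint : Integrable (fun z : Euc N => (1 + ‖z‖) ^ (-(2 + σ))) volume := by
          refine integrable_one_add_norm ?_
          rw [finrank_euclideanSpace_fin]
          linarith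
        set Kg := ∫⁻ z : Euc N, ENNReal.ofReal ((1 + ‖z‖) ^ (-(2 + σ))) with hKgdef
        have hKgtop : Kg ≠ ⊤ := by
          have h1 := hint.2
          have h2 : ∀ z : Euc N, (‖(1 + ‖z‖) ^ (-(2 + σ))‖₊ : ℝ≥0∞)
              = ENNReal.ofReal ((1 + ‖z‖) ^ (-(2 + σ))) := fun z =>
            Real.enorm_eq_ofReal (Real.rpow_nonneg (by positivity) _)
          rw [hKgdef, ← lintegral_congr h2]
          exact h1.ne
        refine ⟨ENNReal.ofReal (2 ^ ((N:ℝ) - 2)) * Kg,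
          ENNReal.mul_ne_top ENNReal.ofReal_ne_top hKgtop, fun y => ?_⟩
        set a := 1 + ‖y‖ with hadef
        have ha1 : 1 ≤ a := by
          rw [hadef]; nlinarith [norm_nonneg y]
        have ha0 : 0 < a := by linarith
        have hhalf : 0 < a / 2 := by linarith
        set s := (ball y (a/2))ᶜ ∩ ball (0 : Euc N) (2 * a) with hsdef
        have hs : MeasurableSet s := measurableSet_ball.compl.inter measurableSet_ball
        calc ∫⁻ z in s, ENNReal.ofReal
              (‖y - z‖ ^ (-((N:ℝ) - 2)) * (1 + ‖z‖) ^ (-(2 + σ)))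
            ≤ ∫⁻ z in s, ENNReal.ofReal ((a/2) ^ (-((N:ℝ) - 2))) *
                ENNReal.ofReal ((1 + ‖z‖) ^ (-(2 + σ))) := by
              refine setLIntegral_mono' hs fun z hz => ?_
              rw [← ENNReal.ofReal_mul (Real.rpow_nonneg hhalf.le _)]
              refine ENNReal.ofReal_le_ofReal ?_
              have hz1 : a/2 ≤ ‖y - z‖ := by
                have := hz.1
                simp only [Set.mem_compl_iff, mem_ball, dist_eq_norm, not_lt] at this
                rw [norm_sub_rev] at this
                exact this
              have b1 : ‖y - z‖ ^ (-((N:ℝ) - 2)) ≤ (a/2) ^ (-((N:ℝ) - 2)) :=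
                Real.rpow_le_rpow_of_nonpos hhalf hz1 (by linarith)
              exact mul_le_mul_of_nonneg_right b1 (Real.rpow_nonneg (by positivity) _)
          _ = ENNReal.ofReal ((a/2) ^ (-((N:ℝ) - 2))) *
                ∫⁻ z in s, ENNReal.ofReal ((1 + ‖z‖) ^ (-(2 + σ))) :=
              lintegral_const_mul' _ _ ENNReal.ofReal_ne_top
          _ ≤ ENNReal.ofReal ((a/2) ^ (-((N:ℝ) - 2))) * Kg := by
              refine mul_le_mul_right ?_ _
              refine le_trans (lintegral_mono_set (Set.subset_univ s)) ?_
              rw [Measure.restrict_univ]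
          _ ≤ (ENNReal.ofReal (2 ^ ((N:ℝ) - 2)) * Kg) * ENNReal.ofReal (a ^ (-m)) := by
              have e1 : (a/2) ^ (-((N:ℝ) - 2)) = 2 ^ ((N:ℝ) - 2) * a ^ (-((N:ℝ) - 2)) := by
                rw [Real.div_rpow ha0.le (by norm_num : (0:ℝ) ≤ 2),
                  Real.rpow_neg (by norm_num : (0:ℝ) ≤ 2), div_eq_mul_inv, inv_inv, mul_comm]
              have e4 : a ^ (-((N:ℝ) - 2)) ≤ a ^ (-m) :=
                Real.rpow_le_rpow_of_exponent_le ha1 (by linarith)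
              have key2 : (a/2) ^ (-((N:ℝ) - 2)) ≤ 2 ^ ((N:ℝ) - 2) * a ^ (-m) := by
                rw [e1]
                exact mul_le_mul_of_nonneg_left e4 h2nn
              exact ofReal_shuffle2 h2nn key2
    obtain ⟨KA, hKAtop, hA⟩ := HA
    obtain ⟨KB, hKBtop, hB⟩ := HB
    obtain ⟨KC, hKCtop, hC⟩ := HC
    refine ⟨KA + KB + KC,
      ENNReal.add_ne_top.mpr ⟨ENNReal.add_ne_top.mpr ⟨hKAtop, hKBtop⟩, hKCtop⟩,
      fun y => ?_⟩
    have hsplit : (ball y ((1 + ‖y‖)/2))ᶜ ⊆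
        ((ball y ((1 + ‖y‖)/2))ᶜ ∩ ball (0 : Euc N) (2 * (1 + ‖y‖))) ∪
          (ball (0 : Euc N) (2 * (1 + ‖y‖)))ᶜ := by
      intro z hz
      by_cases h : z ∈ ball (0 : Euc N) (2 * (1 + ‖y‖))
      · exact Or.inl ⟨hz, h⟩
      · exact Or.inr h
    calc (∫⁻ z : Euc N, ENNReal.ofReal
          (‖y - z‖ ^ (-((N:ℝ) - 2)) * (1 + ‖z‖) ^ (-(2 + σ))))
        = (∫⁻ z in ball y ((1 + ‖y‖)/2), ENNReal.ofReal
            (‖y - z‖ ^ (-((N:ℝ) - 2)) * (1 + ‖z‖) ^ (-(2 + σ)))) +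
          (∫⁻ z in (ball y ((1 + ‖y‖)/2))ᶜ, ENNReal.ofReal
            (‖y - z‖ ^ (-((N:ℝ) - 2)) * (1 + ‖z‖) ^ (-(2 + σ)))) :=
          (lintegral_add_compl _ measurableSet_ball).symm
      _ ≤ (∫⁻ z in ball y ((1 + ‖y‖)/2), ENNReal.ofReal
            (‖y - z‖ ^ (-((N:ℝ) - 2)) * (1 + ‖z‖) ^ (-(2 + σ)))) +
          ((∫⁻ z in (ball y ((1 + ‖y‖)/2))ᶜ ∩ ball (0 : Euc N) (2 * (1 + ‖y‖)),
              ENNReal.ofReal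
                (‖y - z‖ ^ (-((N:ℝ) - 2)) * (1 + ‖z‖) ^ (-(2 + σ)))) +
            (∫⁻ z in (ball (0 : Euc N) (2 * (1 + ‖y‖)))ᶜ, ENNReal.ofReal
              (‖y - z‖ ^ (-((N:ℝ) - 2)) * (1 + ‖z‖) ^ (-(2 + σ))))) :=
          add_le_add_right
            (le_trans (lintegral_mono_set hsplit) (lintegral_union_le _ _ _)) _
      _ ≤ KA * ENNReal.ofReal ((1 + ‖y‖) ^ (-m)) +
            (KB * ENNReal.ofReal ((1 + ‖y‖) ^ (-m)) +
              KC * ENNReal.ofReal ((1 + ‖y‖) ^ (-m))) :=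
          add_le_add (hA y) (add_le_add (hB y) (hC y))
      _ = (KA + KB + KC) * ENNReal.ofReal ((1 + ‖y‖) ^ (-m)) := by ring
  refine ⟨K.toReal + 1, by have := ENNReal.toReal_nonneg (a := K); linarith, fun y => ?_⟩
  have hmeas := hFm y
  have hnn : ∀ z : Euc N,
      0 ≤ ‖y - z‖ ^ (-((N:ℝ) - 2)) * (1 + ‖z‖) ^ (-(2 + σ)) := hFnn y
  have hfin : HasFiniteIntegral
      (fun z : Euc N => ‖y - z‖ ^ (-((N:ℝ) - 2)) * (1 + ‖z‖) ^ (-(2 + σ))) volume := by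
    rw [hasFiniteIntegral_iff_ofReal (Eventually.of_forall hnn)]
    exact lt_of_le_of_lt (hK y)
      (ENNReal.mul_lt_top hKtop.lt_top ENNReal.ofReal_lt_top)
  have hint : Integrable
      (fun z : Euc N => ‖y - z‖ ^ (-((N:ℝ) - 2)) * (1 + ‖z‖) ^ (-(2 + σ))) volume :=
    ⟨hmeas.aestronglyMeasurable, hfin⟩
  refine ⟨hint, ?_⟩
  rw [integral_eq_lintegral_of_nonneg_ae (Eventually.of_forall hnn)
    hmeas.aestronglyMeasurable]
  have h2 : (∫⁻ z : Euc N, ENNReal.ofReal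
        (‖y - z‖ ^ (-((N:ℝ) - 2)) * (1 + ‖z‖) ^ (-(2 + σ)))).toReal
      ≤ (K * ENNReal.ofReal ((1 + ‖y‖) ^ (-m))).toReal :=
    ENNReal.toReal_mono (ENNReal.mul_ne_top hKtop ENNReal.ofReal_ne_top) (hK y)
  refine le_trans h2 ?_
  rw [ENNReal.toReal_mul, ENNReal.toReal_ofReal (Real.rpow_nonneg (by positivity) _)]
  refine mul_le_mul_of_nonneg_right ?_ (Real.rpow_nonneg (by positivity) _)
  have := ENNReal.toReal_nonneg (a := K)
  linarith


end
end
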